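/- arXiv:1711.08432 — 5 statements merged into one kernel-verified Lean document; each statement's English description precedes it below -/
import Mathlib

section
/- The map a ↦ Ψ_{n+1}(a)/Ψ_n(a) is strictly increasing on (0,∞), where Ψ_n is the polygamma function of order n. -/
open MeasureTheory Real Set

noncomputable def stmtW (k : ℕ) (x t : ℝ) : ℝ := t ^ k * Real.exp (-x * t) / (1 - Real.exp (-t))

lemma stmtW_meas (k : ℕ) (x : ℝ) : Measurable (stmtW k x) := by
  unfold stmtW; fun_prop

lemma one_sub_exp_pos {t : ℝ} (ht : 0 < t) : 0 < 1 - Real.exp (-t) := by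
  have : Real.exp (-t) < Real.exp 0 := Real.exp_lt_exp.2 (by linarith)
  simpa using this

lemma stmtW_pos (k : ℕ) (x : ℝ) {t : ℝ} (ht : 0 < t) : 0 < stmtW k x t :=
  div_pos (mul_pos (pow_pos ht k) (Real.exp_pos _)) (one_sub_exp_pos ht)

lemma mul_exp_le {t : ℝ} (ht : 0 ≤ t) : t * Real.exp (-t) ≤ 1 - Real.exp (-t) := by
  have h1 : t + 1 ≤ Real.exp t := Real.add_one_le_exp t
  have h2 : Real.exp t * Real.exp (-t) = 1 := by rw [← Real.exp_add]; simp
  nlinarith [Real.exp_pos (-t)]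

lemma stmtW_le_on_Ioc {k : ℕ} (hk : 1 ≤ k) {x t : ℝ} (hx : 0 < x) (ht : t ∈ Ioc (0:ℝ) 1) :
    stmtW k x t ≤ Real.exp 1 := by
  obtain ⟨ht0, ht1⟩ := ht
  have hd := one_sub_exp_pos ht0
  have hte := mul_exp_le ht0.le
  have h1 : t ^ k ≤ t := by
    have := pow_le_pow_of_le_one ht0.le ht1 hk
    simpa using this
  have h2 : Real.exp (-x * t) ≤ 1 := by
    exact Real.exp_le_one_iff.2 (by nlinarith)
  have h3 : (1:ℝ) ≤ Real.exp (1 - t) := by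
    exact Real.one_le_exp (by linarith)
  have h4 : Real.exp 1 * Real.exp (-t) = Real.exp (1 - t) := by
    rw [← Real.exp_add]; ring_nf
  rw [stmtW, div_le_iff₀ hd]
  nlinarith [pow_nonneg ht0.le k, Real.exp_pos (-x*t), Real.exp_pos (-t), Real.exp_pos (1:ℝ)]

lemma stmtW_int {k : ℕ} (hk : 1 ≤ k) {x : ℝ} (hx : 0 < x) :
    IntegrableOn (stmtW k x) (Ioi 0) := by
  have hsplit : Ioc (0:ℝ) 1 ∪ Ioi 1 = Ioi 0 := Ioc_union_Ioi_eq_Ioi zero_le_one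
  rw [← hsplit]
  apply IntegrableOn.union
  · refine Integrable.mono' (g := fun _ => Real.exp 1) ((integrableOn_const_iff (C := Real.exp 1)).2 (Or.inr ?_))
      ((stmtW_meas k x).aestronglyMeasurable.restrict) ?_
    · simp [measure_Ioc_lt_top]
    · filter_upwards [ae_restrict_mem measurableSet_Ioc] with t ht
      rw [Real.norm_eq_abs, abs_of_nonneg (stmtW_pos k x ht.1).le]
      exact stmtW_le_on_Ioc hk hx ht
  · have base : IntegrableOn (fun t : ℝ => t ^ k * Real.exp (-x * t)) (Ioi 0) := by
      have h := integrableOn_rpow_mul_exp_neg_mul_rpow (p := 1) (s := (k : ℝ))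
        (by exact_mod_cast neg_one_lt_zero.trans_le (Nat.cast_nonneg k)) zero_lt_one hx
      refine h.congr_fun (fun t ht => ?_) measurableSet_Ioi
      dsimp only
      rw [Real.rpow_one, Real.rpow_natCast]
    have base1 := base.mono_set (Ioi_subset_Ioi zero_le_one)
    refine Integrable.mono' (base1.const_mul ((1 - Real.exp (-1))⁻¹))
      ((stmtW_meas k x).aestronglyMeasurable.restrict) ?_
    filter_upwards [ae_restrict_mem measurableSet_Ioi] with t ht
    have h1t : (1:ℝ) < t := ht
    have ht0 : (0:ℝ) < t := lt_trans zero_lt_one h1t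
    have hd1 : (0:ℝ) < 1 - Real.exp (-1) := one_sub_exp_pos zero_lt_one
    have hdt : 1 - Real.exp (-1) ≤ 1 - Real.exp (-t) := by
      have : Real.exp (-t) ≤ Real.exp (-1) := Real.exp_le_exp.2 (by linarith)
      linarith
    rw [Real.norm_eq_abs, abs_of_nonneg (stmtW_pos k x ht0).le, stmtW]
    rw [div_le_iff₀ (one_sub_exp_pos ht0)]
    have hnum : 0 ≤ t ^ k * Real.exp (-x * t) := by positivity
    calc t ^ k * Real.exp (-x * t)
        = (1 - Real.exp (-1))⁻¹ * (t ^ k * Real.exp (-x * t)) * (1 - Real.exp (-1)) := by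
          field_simp
      _ ≤ (1 - Real.exp (-1))⁻¹ * (t ^ k * Real.exp (-x * t)) * (1 - Real.exp (-t)) := by
          apply mul_le_mul_of_nonneg_left hdt; positivity

lemma stmtF_pos {k : ℕ} (hk : 1 ≤ k) {x : ℝ} (hx : 0 < x) :
    0 < ∫ t in Ioi (0:ℝ), stmtW k x t := by
  rw [setIntegral_pos_iff_support_of_nonneg_ae ?_ (stmtW_int hk hx)]
  · have hsub : Ioi (0:ℝ) ⊆ Function.support (stmtW k x) ∩ Ioi 0 :=
      fun t ht => ⟨(stmtW_pos k x ht).ne', ht⟩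
    refine lt_of_lt_of_le ?_ (measure_mono hsub)
    rw [Real.volume_Ioi]; exact ENNReal.zero_lt_top
  · filter_upwards [ae_restrict_mem measurableSet_Ioi] with t ht
    exact (stmtW_pos k x ht).le

lemma stmtS_eq (n : ℕ) (a b : ℝ) {t s : ℝ} (ht : 0 < t) (hs : 0 < s) :
    (stmtW (n+1) a t * stmtW n b s - stmtW (n+1) b t * stmtW n a s)
      + (stmtW (n+1) a s * stmtW n b t - stmtW (n+1) b s * stmtW n a t)
    = t ^ n * s ^ n * ((t - s) *
        (Real.exp (-a*t) * Real.exp (-b*s) - Real.exp (-b*t) * Real.exp (-a*s)))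
      / ((1 - Real.exp (-t)) * (1 - Real.exp (-s))) := by
  have h1 := (one_sub_exp_pos ht).ne'
  have h2 := (one_sub_exp_pos hs).ne'
  simp only [stmtW, pow_succ]
  field_simp
  ring

lemma stmtS_nonneg (n : ℕ) {a b : ℝ} (hab : a < b) {t s : ℝ} (ht : 0 < t) (hs : 0 < s) :
    0 ≤ (stmtW (n+1) a t * stmtW n b s - stmtW (n+1) b t * stmtW n a s)
      + (stmtW (n+1) a s * stmtW n b t - stmtW (n+1) b s * stmtW n a t) := by
  rw [stmtS_eq n a b ht hs]
  apply div_nonneg _ (le_of_lt (mul_pos (one_sub_exp_pos ht) (one_sub_exp_pos hs)))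
  apply mul_nonneg (by positivity)
  rcases le_total s t with h | h
  · apply mul_nonneg (by linarith)
    rw [← Real.exp_add, ← Real.exp_add, sub_nonneg]
    exact Real.exp_le_exp.2 (by nlinarith)
  · rw [← neg_mul_neg]
    apply mul_nonneg (by linarith)
    rw [neg_sub, ← Real.exp_add, ← Real.exp_add, sub_nonneg]
    exact Real.exp_le_exp.2 (by nlinarith)

lemma stmtS_pos (n : ℕ) {a b : ℝ} (hab : a < b) {t s : ℝ} (ht : 0 < t) (hs : 0 < s)
    (hne : t ≠ s) :
    0 < (stmtW (n+1) a t * stmtW n b s - stmtW (n+1) b t * stmtW n a s)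
      + (stmtW (n+1) a s * stmtW n b t - stmtW (n+1) b s * stmtW n a t) := by
  rw [stmtS_eq n a b ht hs]
  apply div_pos _ (mul_pos (one_sub_exp_pos ht) (one_sub_exp_pos hs))
  apply mul_pos (by positivity)
  rcases lt_or_gt_of_ne hne with h | h
  · apply mul_pos_of_neg_of_neg (by linarith)
    rw [← Real.exp_add, ← Real.exp_add, sub_neg]
    exact Real.exp_lt_exp.2 (by nlinarith)
  · apply mul_pos (by linarith)
    rw [← Real.exp_add, ← Real.exp_add, sub_pos]
    exact Real.exp_lt_exp.2 (by nlinarith)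

lemma diag_null : (volume.prod volume) {z : ℝ × ℝ | z.1 = z.2} = 0 := by
  have hm : MeasurableSet {z : ℝ × ℝ | z.1 = z.2} :=
    measurableSet_eq_fun measurable_fst measurable_snd
  rw [Measure.prod_apply hm]
  have h : ∀ x : ℝ, (Prod.mk x ⁻¹' {z : ℝ × ℝ | z.1 = z.2}) = {x} := by
    intro x; ext y; simp [eq_comm]
  simp [h]

lemma stmt_key (n : ℕ) (hn : 1 ≤ n) {a b : ℝ} (ha : 0 < a) (hab : a < b) :
    (∫ t in Ioi (0:ℝ), stmtW (n+1) b t) * ∫ t in Ioi (0:ℝ), stmtW n a t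
      < (∫ t in Ioi (0:ℝ), stmtW (n+1) a t) * ∫ t in Ioi (0:ℝ), stmtW n b t := by
  have hb : 0 < b := ha.trans hab
  set μ := volume.restrict (Ioi (0:ℝ)) with hμ
  have i1 : Integrable (stmtW (n+1) a) μ := stmtW_int (by omega) ha
  have i2 : Integrable (stmtW (n+1) b) μ := stmtW_int (by omega) hb
  have i3 : Integrable (stmtW n a) μ := stmtW_int hn ha
  have i4 : Integrable (stmtW n b) μ := stmtW_int hn hb
  set Δ : ℝ × ℝ → ℝ := fun z =>
    stmtW (n+1) a z.1 * stmtW n b z.2 - stmtW (n+1) b z.1 * stmtW n a z.2 with hΔdef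
  have hΔint : Integrable Δ (μ.prod μ) := (i1.mul_prod i4).sub (i2.mul_prod i3)
  have hΔswap : Integrable (fun z => Δ z.swap) (μ.prod μ) := hΔint.swap
  have hD : ∫ z, Δ z ∂(μ.prod μ)
      = (∫ t, stmtW (n+1) a t ∂μ) * (∫ t, stmtW n b t ∂μ)
        - (∫ t, stmtW (n+1) b t ∂μ) * (∫ t, stmtW n a t ∂μ) := by
    rw [hΔdef]
    rw [integral_sub (i1.mul_prod i4) (i2.mul_prod i3), integral_prod_mul, integral_prod_mul]
  have hswap : ∫ z, Δ z.swap ∂(μ.prod μ) = ∫ z, Δ z ∂(μ.prod μ) := integral_prod_swap Δ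
  have hsum : ∫ z, (Δ z + Δ z.swap) ∂(μ.prod μ) = 2 * ∫ z, Δ z ∂(μ.prod μ) := by
    rw [integral_add hΔint hΔswap, hswap]; ring
  have hpos : 0 < ∫ z, (Δ z + Δ z.swap) ∂(μ.prod μ) := by
    have hprod : μ.prod μ = (volume.prod volume).restrict (Ioi (0:ℝ) ×ˢ Ioi (0:ℝ)) :=
      Measure.prod_restrict _ _
    have hintS : Integrable (fun z => Δ z + Δ z.swap)
        ((volume.prod volume).restrict (Ioi (0:ℝ) ×ˢ Ioi (0:ℝ))) := by
      rw [← hprod]; exact hΔint.add hΔswap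
    rw [hprod]
    rw [setIntegral_pos_iff_support_of_nonneg_ae ?_ hintS]
    · have hsub : (Ioi (0:ℝ) ×ˢ Ioi (0:ℝ)) \ {z : ℝ × ℝ | z.1 = z.2}
          ⊆ Function.support (fun z => Δ z + Δ z.swap) ∩ (Ioi (0:ℝ) ×ˢ Ioi (0:ℝ)) := by
        rintro ⟨t, s⟩ ⟨⟨ht, hs⟩, hne⟩
        refine ⟨(stmtS_pos n hab ht hs ?_).ne', ht, hs⟩
        simpa using hne
      refine lt_of_lt_of_le ?_ (measure_mono hsub)
      rw [measure_diff_null diag_null, Measure.prod_prod, Real.volume_Ioi]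
      simp
    · filter_upwards [ae_restrict_mem (measurableSet_Ioi.prod measurableSet_Ioi)] with z hz
      exact stmtS_nonneg n hab hz.1 hz.2
  have := hsum ▸ hpos
  have hD' := hD
  rw [hμ] at hD'
  nlinarith [hD' ▸ (by linarith : 0 < ∫ z, Δ z ∂(μ.prod μ))]

/-- The map `a ↦ Ψ_{n+1}(a)/Ψ_n(a)` is strictly increasing on `(0,∞)`,
where `Ψ n` is the polygamma function of order `n`, characterized by its integral
representation `Ψ_n(x) = (-1)^{n+1} ∫_0^∞ tⁿ e^{-xt}/(1-e^{-t}) dt` for `x > 0`. -/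
theorem stmt_0
    (Ψ : ℕ → ℝ → ℝ)
    (hΨ : ∀ (k : ℕ) (x : ℝ), 1 ≤ k → 0 < x →
      Ψ k x = (-1 : ℝ) ^ (k + 1) *
        ∫ t in Set.Ioi (0 : ℝ), t ^ k * Real.exp (-x * t) / (1 - Real.exp (-t)))
    (n : ℕ) (hn : 1 ≤ n) :
    StrictMonoOn (fun a => Ψ (n + 1) a / Ψ n a) (Set.Ioi (0 : ℝ)) := by
  intro a ha b hb hab
  rw [mem_Ioi] at ha hb
  have hΨeq : ∀ (k : ℕ) (x : ℝ), 1 ≤ k → 0 < x →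
      Ψ k x = (-1 : ℝ) ^ (k + 1) * ∫ t in Ioi (0:ℝ), stmtW k x t := by
    intro k x hk hx; rw [hΨ k x hk hx]; rfl
  simp only
  rw [hΨeq (n+1) a (by omega) ha, hΨeq n a hn ha, hΨeq (n+1) b (by omega) hb,
    hΨeq n b hn hb]
  have hsign : ∀ G F : ℝ, (-1 : ℝ) ^ (n + 1 + 1) * G / ((-1 : ℝ) ^ (n + 1) * F)
      = -(G / F) := by
    intro G F
    have hne : ((-1 : ℝ)) ^ (n + 1) ≠ 0 := pow_ne_zero _ (by norm_num)
    rw [pow_succ]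
    rw [show (-1:ℝ) ^ (n+1) * -1 * G = (-1:ℝ) ^ (n+1) * (-G) by ring]
    rw [mul_div_mul_left _ _ hne, neg_div]
  rw [hsign, hsign, neg_lt_neg_iff]
  have hFa := stmtF_pos hn ha
  have hFb := stmtF_pos hn hb
  rw [div_lt_div_iff₀ hFb hFa]
  exact stmt_key n hn ha hab
end

section
/- For positive reals θ, μ we have Ψ_1(θ)Ψ_2(θ+μ) - Ψ_1(θ+μ)Ψ_2(θ) > 0, where Ψ_n denotes the polygamma function of order n. -/
open MeasureTheory Set Real

lemma intOn_pow_exp (m : ℕ) {b : ℝ} (hb : 0 < b) :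
    IntegrableOn (fun t : ℝ => t ^ m * Real.exp (-b * t)) (Set.Ioi 0) := by
  have h := integrableOn_rpow_mul_exp_neg_mul_rpow (p := 1) (s := (m : ℝ))
    (lt_of_lt_of_le neg_one_lt_zero (Nat.cast_nonneg m)) one_pos hb
  simpa [Real.rpow_natCast, Real.rpow_one] using h

lemma aux_int {k : ℕ} (hk : 1 ≤ k) {x : ℝ} (hx : 0 < x) :
    IntegrableOn (fun t : ℝ => t ^ k * Real.exp (-x * t) / (1 - Real.exp (-t)))
      (Set.Ioi 0) := by
  obtain ⟨j, rfl⟩ : ∃ j, k = j + 1 := ⟨k - 1, (Nat.succ_pred_eq_of_pos hk).symm⟩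
  have hmeas : AEStronglyMeasurable
      (fun t : ℝ => t ^ (j + 1) * Real.exp (-x * t) / (1 - Real.exp (-t)))
      (volume.restrict (Set.Ioi 0)) := by
    apply Measurable.aestronglyMeasurable
    exact ((measurable_id.pow_const _).mul
      ((measurable_id.const_mul (-x)).exp)).div
      (measurable_const.sub measurable_id.neg.exp)
  have hbound : IntegrableOn
      (fun t : ℝ => (t ^ j + t ^ (j + 1)) * Real.exp (-x * t)) (Set.Ioi 0) := by
    have h := (intOn_pow_exp j hx).add (intOn_pow_exp (j + 1) hx)
    exact h.congr (ae_of_all _ fun t => by simp only [Pi.add_apply]; ring)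
  refine Integrable.mono' hbound hmeas ?_
  rw [ae_restrict_iff' measurableSet_Ioi]
  refine ae_of_all _ fun t ht => ?_
  have ht : (0 : ℝ) < t := ht
  have hD : 0 < 1 - Real.exp (-t) :=
    sub_pos.2 (Real.exp_lt_one_iff.2 (by linarith))
  have h1t : (0 : ℝ) < 1 + t := by linarith
  have key : t ≤ (1 - Real.exp (-t)) * (1 + t) := by
    have he2 : Real.exp (-t) * (1 + t) ≤ 1 := by
      have he : 1 + t ≤ Real.exp t := by linarith [Real.add_one_le_exp t]
      calc Real.exp (-t) * (1 + t) ≤ Real.exp (-t) * Real.exp t := by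
            nlinarith [Real.exp_pos (-t)]
        _ = 1 := by rw [← Real.exp_add]; simp
    nlinarith
  have hE := Real.exp_pos (-x * t)
  have htj := pow_pos ht j
  have hfnn : 0 ≤ t ^ (j + 1) * Real.exp (-x * t) / (1 - Real.exp (-t)) :=
    div_nonneg (by positivity) hD.le
  rw [Real.norm_of_nonneg hfnn, div_le_iff₀ hD]
  have hmul := mul_le_mul_of_nonneg_left key (le_of_lt (mul_pos htj hE))
  rw [pow_succ]
  nlinarith [hmul]

lemma chebyshev_aux {θ μ : ℝ} (hθ : 0 < θ) (hμ : 0 < μ) :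
    (∫ t in Set.Ioi (0 : ℝ), t ^ 1 * Real.exp (-θ * t) / (1 - Real.exp (-t))) *
      (∫ t in Set.Ioi (0 : ℝ), t ^ 2 * Real.exp (-(θ + μ) * t) / (1 - Real.exp (-t))) <
    (∫ t in Set.Ioi (0 : ℝ), t ^ 1 * Real.exp (-(θ + μ) * t) / (1 - Real.exp (-t))) *
      (∫ t in Set.Ioi (0 : ℝ), t ^ 2 * Real.exp (-θ * t) / (1 - Real.exp (-t))) := by
  have hθμ : 0 < θ + μ := by linarith
  set ν : Measure ℝ := volume.restrict (Set.Ioi 0) with hν_def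
  set w : ℝ → ℝ := fun t => t * Real.exp (-θ * t) / (1 - Real.exp (-t)) with hw_def
  set g : ℝ → ℝ := fun t => Real.exp (-μ * t) with hg_def
  -- integrability of the four one-variable integrands
  have hw : Integrable w ν := by
    have h := aux_int (k := 1) le_rfl hθ
    exact h.congr (ae_of_all _ fun t => by rw [hw_def]; ring)
  have htw : Integrable (fun t => t * w t) ν := by
    have h := aux_int (k := 2) (by norm_num) hθ
    exact h.congr (ae_of_all _ fun t => by rw [hw_def]; ring)
  have hexp_split : ∀ t : ℝ, Real.exp (-(θ + μ) * t) = Real.exp (-θ * t) * Real.exp (-μ * t) := by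
    intro t
    rw [← Real.exp_add]; ring_nf
  have hwg : Integrable (fun t => w t * g t) ν := by
    have h := aux_int (k := 1) le_rfl hθμ
    refine h.congr (ae_of_all _ fun t => ?_)
    rw [hw_def, hg_def]; simp only []
    rw [hexp_split t]; ring
  have htwg : Integrable (fun t => t * (w t * g t)) ν := by
    have h := aux_int (k := 2) (by norm_num) hθμ
    refine h.congr (ae_of_all _ fun t => ?_)
    rw [hw_def, hg_def]; simp only []
    rw [hexp_split t]; ring
  -- nonnegativity of w
  have hwnn : ∀ t : ℝ, 0 ≤ w t := by
    intro t
    rcases lt_trichotomy t 0 with h | h | h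
    · have hnum : t * Real.exp (-θ * t) ≤ 0 :=
        mul_nonpos_iff.2 (Or.inr ⟨h.le, (Real.exp_pos _).le⟩)
      have hden : 1 - Real.exp (-t) ≤ 0 :=
        sub_nonpos.2 (Real.one_le_exp (by linarith))
      rw [hw_def]
      exact div_nonneg_iff.2 (Or.inr ⟨hnum, hden⟩)
    · simp [hw_def, h]
    · have hden : 0 < 1 - Real.exp (-t) :=
        sub_pos.2 (Real.exp_lt_one_iff.2 (by linarith))
      rw [hw_def]
      exact div_nonneg (mul_nonneg h.le (Real.exp_pos _).le) hden.le
  -- positivity of w on positives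
  have hwpos : ∀ t : ℝ, 0 < t → 0 < w t := by
    intro t ht
    have hden : 0 < 1 - Real.exp (-t) :=
      sub_pos.2 (Real.exp_lt_one_iff.2 (by linarith))
    rw [hw_def]
    exact div_pos (mul_pos ht (Real.exp_pos _)) hden
  -- the symmetrized kernel
  set H : ℝ × ℝ → ℝ :=
    fun p => w p.1 * w p.2 * ((g p.1 - g p.2) * (p.2 - p.1)) with hH_def
  have hHeq : H = fun p : ℝ × ℝ =>
      (w p.1 * g p.1) * (p.2 * w p.2) - (p.1 * (w p.1 * g p.1)) * w p.2
        - w p.1 * (p.2 * (w p.2 * g p.2)) + (p.1 * w p.1) * (w p.2 * g p.2) := by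
    funext p; rw [hH_def]; ring
  have h1 : Integrable (fun p : ℝ × ℝ => (w p.1 * g p.1) * (p.2 * w p.2)) (ν.prod ν) :=
    hwg.mul_prod htw
  have h2 : Integrable (fun p : ℝ × ℝ => (p.1 * (w p.1 * g p.1)) * w p.2) (ν.prod ν) :=
    htwg.mul_prod hw
  have h3 : Integrable (fun p : ℝ × ℝ => w p.1 * (p.2 * (w p.2 * g p.2))) (ν.prod ν) :=
    hw.mul_prod htwg
  have h4 : Integrable (fun p : ℝ × ℝ => (p.1 * w p.1) * (w p.2 * g p.2)) (ν.prod ν) :=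
    htw.mul_prod hwg
  have h12 : Integrable (fun p : ℝ × ℝ =>
      (w p.1 * g p.1) * (p.2 * w p.2) - (p.1 * (w p.1 * g p.1)) * w p.2) (ν.prod ν) :=
    h1.sub h2
  have h123 : Integrable (fun p : ℝ × ℝ =>
      (w p.1 * g p.1) * (p.2 * w p.2) - (p.1 * (w p.1 * g p.1)) * w p.2
        - w p.1 * (p.2 * (w p.2 * g p.2))) (ν.prod ν) := h12.sub h3
  have h1234 : Integrable (fun p : ℝ × ℝ =>
      (w p.1 * g p.1) * (p.2 * w p.2) - (p.1 * (w p.1 * g p.1)) * w p.2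
        - w p.1 * (p.2 * (w p.2 * g p.2)) + (p.1 * w p.1) * (w p.2 * g p.2)) (ν.prod ν) :=
    h123.add h4
  have hHint : Integrable H (ν.prod ν) := by
    rw [hHeq]; exact h1234
  have hHnn : ∀ p : ℝ × ℝ, 0 ≤ H p := by
    intro p
    rw [hH_def]
    refine mul_nonneg (mul_nonneg (hwnn _) (hwnn _)) ?_
    rcases le_total p.1 p.2 with h | h
    · refine mul_nonneg (sub_nonneg.2 ?_) (sub_nonneg.2 h)
      rw [hg_def]
      exact Real.exp_le_exp.2 (by nlinarith)
    · refine mul_nonneg_iff.2 (Or.inr ⟨sub_nonpos.2 ?_, sub_nonpos.2 h⟩)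
      rw [hg_def]
      exact Real.exp_le_exp.2 (by nlinarith)
  -- strict positivity of the double integral
  have hpos : 0 < ∫ p, H p ∂(ν.prod ν) := by
    rw [integral_pos_iff_support_of_nonneg hHnn hHint]
    have hsub : (Set.Ioo (1 : ℝ) 2) ×ˢ (Set.Ioo (3 : ℝ) 4) ⊆ Function.support H := by
      rintro ⟨s, t⟩ ⟨hs, ht⟩
      have hs1 : (0 : ℝ) < s := by linarith [hs.1]
      have ht1 : (0 : ℝ) < t := by linarith [ht.1]
      have hst : s < t := by linarith [hs.2, ht.1]
      have hg : g t < g s := by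
        rw [hg_def]
        exact Real.exp_lt_exp.2 (by nlinarith)
      have : 0 < H (s, t) := by
        rw [hH_def]
        exact mul_pos (mul_pos (hwpos s hs1) (hwpos t ht1))
          (mul_pos (by linarith) (by linarith))
      exact ne_of_gt this
    refine lt_of_lt_of_le ?_ (measure_mono hsub)
    rw [Measure.prod_prod, hν_def]
    rw [Measure.restrict_apply measurableSet_Ioo, Measure.restrict_apply measurableSet_Ioo]
    have e1 : Set.Ioo (1 : ℝ) 2 ∩ Set.Ioi 0 = Set.Ioo 1 2 :=
      Set.inter_eq_left.2 (fun x hx => by exact lt_trans one_pos hx.1)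
    have e2 : Set.Ioo (3 : ℝ) 4 ∩ Set.Ioi 0 = Set.Ioo 3 4 :=
      Set.inter_eq_left.2 (fun x hx => by simp at hx ⊢; linarith [hx.1])
    rw [e1, e2, Real.volume_Ioo, Real.volume_Ioo]
    norm_num
  -- expand the double integral
  have hexpand : ∫ p, H p ∂(ν.prod ν) =
      (∫ t, w t * g t ∂ν) * (∫ t, t * w t ∂ν)
        - (∫ t, t * (w t * g t) ∂ν) * (∫ t, w t ∂ν)
        - (∫ t, w t ∂ν) * (∫ t, t * (w t * g t) ∂ν)
        + (∫ t, t * w t ∂ν) * (∫ t, w t * g t ∂ν) := by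
    rw [hHeq]
    rw [integral_add h123 h4, integral_sub h12 h3, integral_sub h1 h2]
    rw [integral_prod_mul (fun t => w t * g t) (fun t => t * w t),
      integral_prod_mul (fun t => t * (w t * g t)) w,
      integral_prod_mul w (fun t => t * (w t * g t)),
      integral_prod_mul (fun t => t * w t) (fun t => w t * g t)]
  rw [hexpand] at hpos
  -- identify the four statement integrals
  have e1 : (∫ t in Set.Ioi (0 : ℝ), t ^ 1 * Real.exp (-θ * t) / (1 - Real.exp (-t)))
      = ∫ t, w t ∂ν :=
    integral_congr_ae (ae_of_all _ fun t => by rw [hw_def]; ring)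
  have e2 : (∫ t in Set.Ioi (0 : ℝ), t ^ 2 * Real.exp (-θ * t) / (1 - Real.exp (-t)))
      = ∫ t, t * w t ∂ν :=
    integral_congr_ae (ae_of_all _ fun t => by rw [hw_def]; ring)
  have e3 : (∫ t in Set.Ioi (0 : ℝ), t ^ 1 * Real.exp (-(θ + μ) * t) / (1 - Real.exp (-t)))
      = ∫ t, w t * g t ∂ν :=
    integral_congr_ae (ae_of_all _ fun t => by
      rw [hw_def, hg_def]; simp only []; rw [hexp_split t]; ring)
  have e4 : (∫ t in Set.Ioi (0 : ℝ), t ^ 2 * Real.exp (-(θ + μ) * t) / (1 - Real.exp (-t)))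
      = ∫ t, t * (w t * g t) ∂ν :=
    integral_congr_ae (ae_of_all _ fun t => by
      rw [hw_def, hg_def]; simp only []; rw [hexp_split t]; ring)
  rw [e1, e2, e3, e4]
  nlinarith [hpos]

/-- For positive reals `θ, μ`,
`Ψ_1(θ)Ψ_2(θ+μ) - Ψ_1(θ+μ)Ψ_2(θ) > 0`, where `Ψ n` is the polygamma function
of order `n`, characterized by its integral representation for `x > 0`. -/
theorem stmt_1
    (Ψ : ℕ → ℝ → ℝ)
    (hΨ : ∀ (k : ℕ) (x : ℝ), 1 ≤ k → 0 < x →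
      Ψ k x = (-1 : ℝ) ^ (k + 1) *
        ∫ t in Set.Ioi (0 : ℝ), t ^ k * Real.exp (-x * t) / (1 - Real.exp (-t)))
    (θ μ : ℝ) (hθ : 0 < θ) (hμ : 0 < μ) :
    0 < Ψ 1 θ * Ψ 2 (θ + μ) - Ψ 1 (θ + μ) * Ψ 2 θ := by
  have hθμ : 0 < θ + μ := by linarith
  rw [hΨ 1 θ le_rfl hθ, hΨ 2 θ (by norm_num) hθ, hΨ 1 (θ + μ) le_rfl hθμ,
    hΨ 2 (θ + μ) (by norm_num) hθμ]
  have key := chebyshev_aux hθ hμ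
  rw [show ((-1 : ℝ)) ^ (1 + 1) = 1 by norm_num, show ((-1 : ℝ)) ^ (2 + 1) = -1 by norm_num]
  nlinarith [key]
end

section
/- For positive reals θ, μ, β, the inequality (Ψ_2(θ+μ+β)-Ψ_2(θ+μ))/(Ψ_1(θ+μ+β)-Ψ_1(θ+μ)) > (Ψ_2(θ+μ)-Ψ_2(θ))/(Ψ_1(θ+μ)-Ψ_1(θ)) holds, where Ψ_n is the polygamma function of order n. -/
open MeasureTheory Real Set Filter

namespace Stmt2Aux

noncomputable def g (k : ℕ) (x : ℝ) (t : ℝ) : ℝ :=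
  t ^ k * Real.exp (-x * t) / (1 - Real.exp (-t))

noncomputable def hfun (μ β t : ℝ) : ℝ :=
  Real.exp (-(μ*t)) * (1 - Real.exp (-(β*t))) / (1 - Real.exp (-(μ*t)))

lemma exp_neg_lt_one {s : ℝ} (hs : 0 < s) : Real.exp (-s) < 1 := by
  rw [Real.exp_lt_one_iff]; linarith

lemma one_sub_exp_neg_pos {s : ℝ} (hs : 0 < s) : 0 < 1 - Real.exp (-s) := by
  linarith [exp_neg_lt_one hs]

lemma key1 {s : ℝ} (hs : 0 < s) : 1 - Real.exp (-s) < s := by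
  have := Real.add_one_lt_exp (x := -s) (by linarith)
  linarith

lemma key2 {s : ℝ} (hs : 0 < s) : s * Real.exp (-s) < 1 - Real.exp (-s) := by
  have h1 := Real.add_one_lt_exp (x := s) (by linarith)
  have h2 : Real.exp s * Real.exp (-s) = 1 := by
    rw [← Real.exp_add]; simp
  nlinarith [Real.exp_pos (-s)]

lemma keyA {x y t : ℝ} (hx : 0 < x) (hy : 0 < y) (ht : 0 < t) :
    x * Real.exp (-(x*t)) * (1 - Real.exp (-(y*t))) < y * (1 - Real.exp (-(x*t))) := by
  have h1 := key1 (mul_pos hy ht)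
  have h2 := key2 (mul_pos hx ht)
  have e1 : 0 < Real.exp (-(x*t)) := Real.exp_pos _
  have e2 : 0 < 1 - Real.exp (-(y*t)) := one_sub_exp_neg_pos (mul_pos hy ht)
  calc x * Real.exp (-(x*t)) * (1 - Real.exp (-(y*t)))
      < x * Real.exp (-(x*t)) * (y*t) :=
        mul_lt_mul_of_pos_left h1 (mul_pos hx e1)
    _ = y * (x*t * Real.exp (-(x*t))) := by ring
    _ < y * (1 - Real.exp (-(x*t))) := mul_lt_mul_of_pos_left h2 hy

lemma g_nonneg {k : ℕ} {x t : ℝ} (ht : 0 < t) : 0 ≤ g k x t := by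
  apply div_nonneg
  · positivity
  · exact (one_sub_exp_neg_pos ht).le

lemma continuousOn_g (k : ℕ) (x : ℝ) : ContinuousOn (g k x) (Ioi 0) := by
  apply ContinuousOn.div
  · fun_prop
  · fun_prop
  · intro t ht
    exact ne_of_gt (one_sub_exp_neg_pos ht)

lemma measurable_g (k : ℕ) (x : ℝ) : Measurable (g k x) := by
  unfold g
  fun_prop

lemma integrable_g {k : ℕ} {x : ℝ} (hk : 1 ≤ k) (hx : 0 < x) :
    IntegrableOn (g k x) (Ioi 0) := by
  have hsplit : Ioc (0:ℝ) 1 ∪ Ioi 1 = Ioi 0 := Ioc_union_Ioi_eq_Ioi zero_le_one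
  rw [← hsplit]
  apply IntegrableOn.union
  · apply Measure.integrableOn_of_bounded (M := Real.exp 1) (by simp)
      (measurable_g k x).aestronglyMeasurable
    rw [ae_restrict_iff' measurableSet_Ioc]
    filter_upwards with t
    rintro ⟨ht0, ht1⟩
    have hden : 0 < 1 - Real.exp (-t) := one_sub_exp_neg_pos ht0
    rw [Real.norm_eq_abs, abs_of_nonneg (g_nonneg ht0)]
    unfold g
    rw [div_le_iff₀ hden]
    have h1 : t ^ k ≤ t := by
      calc t ^ k ≤ t ^ 1 := pow_le_pow_of_le_one ht0.le ht1 hk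
        _ = t := pow_one t
    have h2 : Real.exp (-x * t) ≤ 1 := by
      rw [Real.exp_le_one_iff]
      nlinarith
    have h3 : t * Real.exp (-1) ≤ t * Real.exp (-t) := by
      apply mul_le_mul_of_nonneg_left _ ht0.le
      exact Real.exp_le_exp.2 (by linarith)
    have h4 := key2 ht0
    have h5 : Real.exp 1 * Real.exp (-1) = 1 := by
      rw [← Real.exp_add]; simp
    nlinarith [Real.exp_pos (-x*t), Real.exp_pos (1:ℝ), pow_pos ht0 k]
  · have hmaj : IntegrableOn (fun t : ℝ => (1 - Real.exp (-1))⁻¹ * (t ^ k * Real.exp (-x * t)))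
        (Ioi 1) := by
      apply Integrable.const_mul
      have h0 : IntegrableOn (fun t : ℝ => t ^ (k:ℝ) * Real.exp (-x * t ^ (1:ℝ))) (Ioi 0) :=
        integrableOn_rpow_mul_exp_neg_mul_rpow (lt_of_lt_of_le (by norm_num) (Nat.cast_nonneg k))
          zero_lt_one hx
      have h1 : IntegrableOn (fun t : ℝ => t ^ k * Real.exp (-x * t)) (Ioi 0) := by
        apply h0.congr_fun _ measurableSet_Ioi
        intro t ht
        simp [Real.rpow_natCast, Real.rpow_one]
      exact h1.mono_set (Ioi_subset_Ioi zero_le_one)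
    apply hmaj.mono' (measurable_g k x).aestronglyMeasurable
    rw [ae_restrict_iff' measurableSet_Ioi]
    filter_upwards with t ht
    have ht0 : (0:ℝ) < t := lt_trans zero_lt_one ht
    have hden : 0 < 1 - Real.exp (-1) := one_sub_exp_neg_pos zero_lt_one
    rw [Real.norm_eq_abs, abs_of_nonneg (g_nonneg ht0)]
    unfold g
    rw [div_le_iff₀ (one_sub_exp_neg_pos ht0)]
    have hd : 1 - Real.exp (-1) ≤ 1 - Real.exp (-t) := by
      have := Real.exp_le_exp.2 (neg_le_neg ht.le)
      linarith
    have hnum : 0 ≤ t ^ k * Real.exp (-x * t) := by positivity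
    calc t ^ k * Real.exp (-x * t)
        = ((1 - Real.exp (-1))⁻¹ * (t ^ k * Real.exp (-x * t))) * (1 - Real.exp (-1)) := by
          field_simp
      _ ≤ ((1 - Real.exp (-1))⁻¹ * (t ^ k * Real.exp (-x * t))) * (1 - Real.exp (-t)) := by
          apply mul_le_mul_of_nonneg_left hd
          positivity

lemma integral_lt_integral (f g : ℝ → ℝ)
    (hfi : IntegrableOn f (Ioi 0)) (hgi : IntegrableOn g (Ioi 0))
    (hle : ∀ t ∈ Ioi (0:ℝ), f t ≤ g t)
    (hc : ContinuousOn (fun t => g t - f t) (Ioi 0))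
    (t₀ : ℝ) (ht₀ : 0 < t₀) (hlt : f t₀ < g t₀) :
    ∫ t in Ioi (0:ℝ), f t < ∫ t in Ioi (0:ℝ), g t := by
  have hd : IntegrableOn (fun t => g t - f t) (Ioi 0) := hgi.sub hfi
  have hpos : 0 < ∫ t in Ioi (0:ℝ), (g t - f t) := by
    rw [setIntegral_pos_iff_support_of_nonneg_ae]
    · have hca : ContinuousAt (fun t => g t - f t) t₀ :=
        hc.continuousAt (Ioi_mem_nhds ht₀)
      have hev : ∀ᶠ t in nhds t₀, 0 < g t - f t :=
        hca.eventually (eventually_gt_nhds (sub_pos.2 hlt))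
      rw [Metric.eventually_nhds_iff] at hev
      obtain ⟨ε, hε, hball⟩ := hev
      set δ := min ε t₀ with hδdef
      have hδ : 0 < δ := lt_min hε ht₀
      have hsub : Ioo (t₀ - δ/2) (t₀ + δ/2) ⊆
          Function.support (fun t => g t - f t) ∩ Ioi 0 := by
        rintro t ⟨h1, h2⟩
        constructor
        · apply ne_of_gt
          apply hball
          rw [Real.dist_eq, abs_lt]
          constructor <;> [linarith [min_le_left ε t₀]; linarith [min_le_left ε t₀]]
        · have := min_le_right ε t₀
          simp only [mem_Ioi]
          linarith
      calc (0:ENNReal) < volume (Ioo (t₀ - δ/2) (t₀ + δ/2)) := by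
            rw [Real.volume_Ioo]
            simp only [ENNReal.ofReal_pos]
            linarith
        _ ≤ _ := measure_mono hsub
    · rw [EventuallyLE, ae_restrict_iff' measurableSet_Ioi]
      filter_upwards with t ht
      exact sub_nonneg.2 (hle t ht)
    · exact hd
  have := integral_sub hgi hfi
  rw [this] at hpos
  linarith

lemma continuousOn_hfun (μ β : ℝ) (hμ : 0 < μ) : ContinuousOn (hfun μ β) (Ioi 0) := by
  apply ContinuousOn.div
  · fun_prop
  · fun_prop
  · intro t ht
    exact ne_of_gt (one_sub_exp_neg_pos (mul_pos hμ ht))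

lemma strictAntiOn_hfun (μ β : ℝ) (hμ : 0 < μ) (hβ : 0 < β) :
    StrictAntiOn (hfun μ β) (Ioi 0) := by
  apply strictAntiOn_of_deriv_neg (convex_Ioi 0) (continuousOn_hfun μ β hμ)
  intro t ht
  rw [interior_Ioi] at ht
  have ht : (0:ℝ) < t := ht
  have hμt : (0:ℝ) < μ * t := mul_pos hμ ht
  have hβt : (0:ℝ) < β * t := mul_pos hβ ht
  set u := Real.exp (-(μ*t)) with hu
  set q := Real.exp (-(β*t)) with hq
  have hw : (0:ℝ) < 1 - u := one_sub_exp_neg_pos hμt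
  have hdu : HasDerivAt (fun s => Real.exp (-(μ*s))) (u * -(μ*1)) t :=
    (((hasDerivAt_id t).const_mul μ).neg).exp
  have hdv : HasDerivAt (fun s => 1 - Real.exp (-(β*s))) (-(q * -(β*1))) t :=
    ((((hasDerivAt_id t).const_mul β).neg).exp).const_sub 1
  have hdw : HasDerivAt (fun s => 1 - Real.exp (-(μ*s))) (-(u * -(μ*1))) t :=
    ((((hasDerivAt_id t).const_mul μ).neg).exp).const_sub 1
  have hD : HasDerivAt (hfun μ β)
      (((u * -(μ*1) * (1 - q) + u * -(q * -(β*1))) * (1 - u) -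
        u * (1 - q) * -(u * -(μ*1))) / (1 - u)^2) t :=
    (hdu.mul hdv).div hdw (ne_of_gt hw)
  rw [hD.deriv]
  apply div_neg_of_neg_of_pos _ (by positivity)
  have hN : (u * -(μ*1) * (1 - q) + u * -(q * -(β*1))) * (1 - u) -
      u * (1 - q) * -(u * -(μ*1)) =
      u * (β * q * (1 - u) - μ * (1 - q)) := by ring
  rw [hN]
  exact mul_neg_of_pos_of_neg (Real.exp_pos _) (sub_neg.2 (keyA hβ hμ ht))

lemma g_two {x t : ℝ} : g 2 x t = t * g 1 x t := by
  unfold g; ring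

lemma g_sub_pos {k : ℕ} {x y t : ℝ} (hxy : x < y) (ht : 0 < t) :
    0 < g k x t - g k y t := by
  unfold g
  rw [div_sub_div_same]
  apply div_pos _ (one_sub_exp_neg_pos ht)
  have : Real.exp (-y * t) < Real.exp (-x * t) := by
    apply Real.exp_lt_exp.2
    nlinarith
  nlinarith [pow_pos ht k]

lemma g_ratio (k : ℕ) {A m b t : ℝ} (hm : 0 < m) (ht : 0 < t) :
    g k (A + m) t - g k (A + m + b) t = hfun m b t * (g k A t - g k (A + m) t) := by
  unfold g hfun
  have h1 : 1 - Real.exp (-t) ≠ 0 := ne_of_gt (one_sub_exp_neg_pos ht)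
  have h2 : 1 - Real.exp (-(m*t)) ≠ 0 := ne_of_gt (one_sub_exp_neg_pos (mul_pos hm ht))
  have e1 : Real.exp (-(A+m) * t) = Real.exp (-A * t) * Real.exp (-(m*t)) := by
    rw [← Real.exp_add]; congr 1; ring
  have e2 : Real.exp (-(A+m+b) * t) =
      Real.exp (-A * t) * Real.exp (-(m*t)) * Real.exp (-(b*t)) := by
    rw [← Real.exp_add, ← Real.exp_add]; congr 1; ring
  rw [e1, e2]
  field_simp
  rw [mul_comm t m, mul_div_cancel_right₀ _ h2]

end Stmt2Aux

set_option maxHeartbeats 2000000 in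
open Stmt2Aux in
/-- For positive reals `θ, μ, β`,
`(Ψ_2(θ+μ+β)-Ψ_2(θ+μ))/(Ψ_1(θ+μ+β)-Ψ_1(θ+μ)) > (Ψ_2(θ+μ)-Ψ_2(θ))/(Ψ_1(θ+μ)-Ψ_1(θ))`,
where `Ψ n` is the polygamma function of order `n`, characterized by its integral
representation for `x > 0`. -/
theorem stmt_2
    (Ψ : ℕ → ℝ → ℝ)
    (hΨ : ∀ (k : ℕ) (x : ℝ), 1 ≤ k → 0 < x →
      Ψ k x = (-1 : ℝ) ^ (k + 1) *
        ∫ t in Set.Ioi (0 : ℝ), t ^ k * Real.exp (-x * t) / (1 - Real.exp (-t)))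
    (θ μ β : ℝ) (hθ : 0 < θ) (hμ : 0 < μ) (hβ : 0 < β) :
    (Ψ 2 (θ + μ + β) - Ψ 2 (θ + μ)) / (Ψ 1 (θ + μ + β) - Ψ 1 (θ + μ)) >
      (Ψ 2 (θ + μ) - Ψ 2 θ) / (Ψ 1 (θ + μ) - Ψ 1 θ) := by
  have hb0 : 0 < θ + μ := by linarith
  have hc0 : 0 < θ + μ + β := by linarith
  have hab : θ < θ + μ := by linarith
  have hbc : θ + μ < θ + μ + β := by linarith
  have hΨ1 : ∀ x : ℝ, 0 < x → Ψ 1 x = ∫ t in Ioi (0:ℝ), g 1 x t := by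
    intro x hx
    rw [hΨ 1 x le_rfl hx]
    norm_num [g]
  have hΨ2 : ∀ x : ℝ, 0 < x → Ψ 2 x = -∫ t in Ioi (0:ℝ), g 2 x t := by
    intro x hx
    rw [hΨ 2 x one_le_two hx]
    norm_num [g]
  have i1a := integrable_g (k := 1) le_rfl hθ
  have i1b := integrable_g (k := 1) le_rfl hb0
  have i1c := integrable_g (k := 1) le_rfl hc0
  have i2a := integrable_g (k := 2) one_le_two hθ
  have i2b := integrable_g (k := 2) one_le_two hb0
  have i2c := integrable_g (k := 2) one_le_two hc0
  obtain ⟨I1a, hI1a⟩ : ∃ r : ℝ, r = ∫ t in Ioi (0:ℝ), g 1 θ t := ⟨_, rfl⟩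
  obtain ⟨I1b, hI1b⟩ : ∃ r : ℝ, r = ∫ t in Ioi (0:ℝ), g 1 (θ+μ) t := ⟨_, rfl⟩
  obtain ⟨I1c, hI1c⟩ : ∃ r : ℝ, r = ∫ t in Ioi (0:ℝ), g 1 (θ+μ+β) t := ⟨_, rfl⟩
  obtain ⟨I2a, hI2a⟩ : ∃ r : ℝ, r = ∫ t in Ioi (0:ℝ), g 2 θ t := ⟨_, rfl⟩
  obtain ⟨I2b, hI2b⟩ : ∃ r : ℝ, r = ∫ t in Ioi (0:ℝ), g 2 (θ+μ) t := ⟨_, rfl⟩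
  obtain ⟨I2c, hI2c⟩ : ∃ r : ℝ, r = ∫ t in Ioi (0:ℝ), g 2 (θ+μ+β) t := ⟨_, rfl⟩
  -- difference integrals
  have D1ab : ∫ t in Ioi (0:ℝ), (g 1 θ t - g 1 (θ+μ) t) = I1a - I1b := by
    rw [hI1a, hI1b]; exact integral_sub i1a i1b
  have D1bc : ∫ t in Ioi (0:ℝ), (g 1 (θ+μ) t - g 1 (θ+μ+β) t) = I1b - I1c := by
    rw [hI1b, hI1c]; exact integral_sub i1b i1c
  have D2ab : ∫ t in Ioi (0:ℝ), (g 2 θ t - g 2 (θ+μ) t) = I2a - I2b := by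
    rw [hI2a, hI2b]; exact integral_sub i2a i2b
  have D2bc : ∫ t in Ioi (0:ℝ), (g 2 (θ+μ) t - g 2 (θ+μ+β) t) = I2b - I2c := by
    rw [hI2b, hI2c]; exact integral_sub i2b i2c
  -- positivity
  have hP : 0 < I1a - I1b := by
    rw [← D1ab]
    have := integral_lt_integral (fun _ => 0) (fun t => g 1 θ t - g 1 (θ+μ) t)
      (integrableOn_zero) (i1a.sub i1b)
      (fun t ht => (g_sub_pos hab ht).le)
      (by simp only [sub_zero]; exact ((continuousOn_g 1 θ).sub (continuousOn_g 1 (θ+μ))))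
      1 zero_lt_one (by simpa using (g_sub_pos (k := 1) hab zero_lt_one))
    simpa using this
  have hP' : 0 < I1b - I1c := by
    rw [← D1bc]
    have := integral_lt_integral (fun _ => 0) (fun t => g 1 (θ+μ) t - g 1 (θ+μ+β) t)
      (integrableOn_zero) (i1b.sub i1c)
      (fun t ht => (g_sub_pos hbc ht).le)
      (by simp only [sub_zero]; exact ((continuousOn_g 1 (θ+μ)).sub (continuousOn_g 1 (θ+μ+β))))
      1 zero_lt_one (by simpa using (g_sub_pos (k := 1) hbc zero_lt_one))
    simpa using this
  obtain ⟨m, hmdef⟩ : ∃ r : ℝ, r = (I1b - I1c) / (I1a - I1b) := ⟨_, rfl⟩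
  have hm : 0 < m := by rw [hmdef]; exact div_pos hP' hP
  have hmP : m * (I1a - I1b) = I1b - I1c := by
    rw [hmdef]; exact div_mul_cancel₀ _ (ne_of_gt hP)
  have Dm1 : ∫ t in Ioi (0:ℝ), m * (g 1 θ t - g 1 (θ+μ) t) = m * (I1a - I1b) := by
    rw [← D1ab]; exact integral_const_mul m _
  have Dm2 : ∫ t in Ioi (0:ℝ), m * (g 2 θ t - g 2 (θ+μ) t) = m * (I2a - I2b) := by
    rw [← D2ab]; exact integral_const_mul m _
  have hid : ∀ (k : ℕ) (t : ℝ), 0 < t →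
      g k (θ+μ) t - g k (θ+μ+β) t = hfun μ β t * (g k θ t - g k (θ+μ) t) :=
    fun k t ht => g_ratio k hμ ht
  have hanti := strictAntiOn_hfun μ β hμ hβ
  -- Step 1
  have step1 : ∃ t₁ ∈ Ioi (0:ℝ), m ≤ hfun μ β t₁ := by
    by_contra hcon
    push_neg at hcon
    have hlt := integral_lt_integral
      (fun t => g 1 (θ+μ) t - g 1 (θ+μ+β) t)
      (fun t => m * (g 1 θ t - g 1 (θ+μ) t))
      (i1b.sub i1c) ((i1a.sub i1b).const_mul m)
      (fun t ht => by
        rw [hid 1 t ht]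
        exact mul_le_mul_of_nonneg_right (hcon t ht).le (g_sub_pos hab ht).le)
      (by
        apply ContinuousOn.sub
        · exact continuousOn_const.mul ((continuousOn_g 1 θ).sub (continuousOn_g 1 (θ+μ)))
        · exact (continuousOn_g 1 (θ+μ)).sub (continuousOn_g 1 (θ+μ+β)))
      1 zero_lt_one
      (by
        rw [hid 1 1 zero_lt_one]
        exact mul_lt_mul_of_pos_right (hcon 1 (mem_Ioi.mpr zero_lt_one)) (g_sub_pos hab zero_lt_one))
    rw [D1bc, Dm1, hmP] at hlt
    exact lt_irrefl _ hlt
  -- Step 2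
  have step2 : ∃ t₂ ∈ Ioi (0:ℝ), hfun μ β t₂ ≤ m := by
    by_contra hcon
    push_neg at hcon
    have hlt := integral_lt_integral
      (fun t => m * (g 1 θ t - g 1 (θ+μ) t))
      (fun t => g 1 (θ+μ) t - g 1 (θ+μ+β) t)
      ((i1a.sub i1b).const_mul m) (i1b.sub i1c)
      (fun t ht => by
        rw [hid 1 t ht]
        exact mul_le_mul_of_nonneg_right (hcon t ht).le (g_sub_pos hab ht).le)
      (by
        apply ContinuousOn.sub
        · exact (continuousOn_g 1 (θ+μ)).sub (continuousOn_g 1 (θ+μ+β))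
        · exact continuousOn_const.mul ((continuousOn_g 1 θ).sub (continuousOn_g 1 (θ+μ))))
      1 zero_lt_one
      (by
        rw [hid 1 1 zero_lt_one]
        exact mul_lt_mul_of_pos_right (hcon 1 (mem_Ioi.mpr zero_lt_one)) (g_sub_pos hab zero_lt_one))
    rw [D1bc, Dm1, hmP] at hlt
    exact lt_irrefl _ hlt
  obtain ⟨t₁, ht₁, hmt₁⟩ := step1
  obtain ⟨t₂, ht₂, hmt₂⟩ := step2
  -- Step 3
  have step3 : ∃ t₀ ∈ Ioi (0:ℝ), hfun μ β t₀ = m := by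
    rcases eq_or_lt_of_le hmt₁ with heq | hlt1
    · exact ⟨t₁, ht₁, heq.symm⟩
    rcases eq_or_lt_of_le hmt₂ with heq | hlt2
    · exact ⟨t₂, ht₂, heq⟩
    have ht₁₂ : t₁ < t₂ := by
      by_contra hcon
      push_neg at hcon
      rcases eq_or_lt_of_le hcon with heq | hlt
      · rw [heq] at hlt2; linarith
      · have := hanti ht₂ ht₁ hlt
        linarith
    have hIcc : Icc t₁ t₂ ⊆ Ioi (0:ℝ) := fun t htt => lt_of_lt_of_le ht₁ htt.1
    have hcont : ContinuousOn (hfun μ β) (Icc t₁ t₂) := (continuousOn_hfun μ β hμ).mono hIcc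
    have hmem : m ∈ Icc (hfun μ β t₂) (hfun μ β t₁) := ⟨hlt2.le, hlt1.le⟩
    obtain ⟨t₀, ht₀mem, ht₀⟩ := intermediate_value_Icc' ht₁₂.le hcont hmem
    exact ⟨t₀, hIcc ht₀mem, ht₀⟩
  obtain ⟨t₀, ht₀mem, ht₀⟩ := step3
  have ht₀pos : (0:ℝ) < t₀ := ht₀mem
  -- Step 4
  have key : (I2b - I2c) - m * (I2a - I2b) < 0 := by
    have hlt := integral_lt_integral
      (fun t => (g 2 (θ+μ) t - g 2 (θ+μ+β) t) - m * (g 2 θ t - g 2 (θ+μ) t))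
      (fun t => t₀ * ((g 1 (θ+μ) t - g 1 (θ+μ+β) t) - m * (g 1 θ t - g 1 (θ+μ) t)))
      ((i2b.sub i2c).sub ((i2a.sub i2b).const_mul m))
      (((i1b.sub i1c).sub ((i1a.sub i1b).const_mul m)).const_mul t₀)
      (fun t ht => by
        have ht' : (0:ℝ) < t := ht
        have hv : 0 < g 1 θ t - g 1 (θ+μ) t := g_sub_pos hab ht'
        have e2 : g 2 θ t - g 2 (θ+μ) t = t * (g 1 θ t - g 1 (θ+μ) t) := by
          rw [g_two, g_two]; ring
        rw [hid 2 t ht', hid 1 t ht', e2]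
        have hsuff : (hfun μ β t - m) * (t - t₀) * (g 1 θ t - g 1 (θ+μ) t) ≤ 0 := by
          rcases lt_trichotomy t t₀ with hcase | hcase | hcase
          · have hh : m < hfun μ β t := by
              rw [← ht₀]; exact hanti ht' ht₀pos hcase
            nlinarith [mul_pos (mul_pos (sub_pos.2 hh) (sub_pos.2 hcase)) hv]
          · rw [hcase, sub_self]
            simp
          · have hh : hfun μ β t < m := by
              rw [← ht₀]; exact hanti ht₀pos ht' hcase
            nlinarith [mul_pos (mul_pos (sub_pos.2 hh) (sub_pos.2 hcase)) hv]
        nlinarith [hsuff])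
      (by
        apply ContinuousOn.sub
        · apply ContinuousOn.mul continuousOn_const
          apply ContinuousOn.sub
          · exact (continuousOn_g 1 (θ+μ)).sub (continuousOn_g 1 (θ+μ+β))
          · exact continuousOn_const.mul ((continuousOn_g 1 θ).sub (continuousOn_g 1 (θ+μ)))
        · apply ContinuousOn.sub
          · exact (continuousOn_g 2 (θ+μ)).sub (continuousOn_g 2 (θ+μ+β))
          · exact continuousOn_const.mul ((continuousOn_g 2 θ).sub (continuousOn_g 2 (θ+μ))))
      (t₀ + 1) (by linarith)
      (by
        have ht1 : (0:ℝ) < t₀ + 1 := by linarith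
        have hv : 0 < g 1 θ (t₀+1) - g 1 (θ+μ) (t₀+1) := g_sub_pos hab ht1
        have hhm : hfun μ β (t₀+1) < m := by
          rw [← ht₀]; exact hanti ht₀pos ht1 (by linarith)
        have e2 : g 2 θ (t₀+1) - g 2 (θ+μ) (t₀+1) =
            (t₀+1) * (g 1 θ (t₀+1) - g 1 (θ+μ) (t₀+1)) := by
          rw [g_two, g_two]; ring
        rw [hid 2 (t₀+1) ht1, hid 1 (t₀+1) ht1, e2]
        nlinarith [mul_pos (mul_pos (sub_pos.2 hhm) (show (0:ℝ) < (t₀+1) - t₀ by linarith)) hv])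
    have EL : ∫ t in Ioi (0:ℝ),
        ((g 2 (θ+μ) t - g 2 (θ+μ+β) t) - m * (g 2 θ t - g 2 (θ+μ) t)) =
        (I2b - I2c) - m * (I2a - I2b) := by
      rw [← D2bc, ← Dm2]
      exact integral_sub (i2b.sub i2c) ((i2a.sub i2b).const_mul m)
    have Einner : ∫ t in Ioi (0:ℝ),
        ((g 1 (θ+μ) t - g 1 (θ+μ+β) t) - m * (g 1 θ t - g 1 (θ+μ) t)) =
        (I1b - I1c) - m * (I1a - I1b) := by
      rw [← D1bc, ← Dm1]
      exact integral_sub (i1b.sub i1c) ((i1a.sub i1b).const_mul m)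
    have ER : ∫ t in Ioi (0:ℝ),
        (t₀ * ((g 1 (θ+μ) t - g 1 (θ+μ+β) t) - m * (g 1 θ t - g 1 (θ+μ) t))) =
        t₀ * ((I1b - I1c) - m * (I1a - I1b)) := by
      rw [← Einner]
      exact integral_const_mul t₀ _
    rw [EL, ER, hmP] at hlt
    simpa using hlt
  -- final algebra
  rw [hΨ1 θ hθ, hΨ1 (θ+μ) hb0, hΨ1 (θ+μ+β) hc0, hΨ2 (θ+μ) hb0, hΨ2 (θ+μ+β) hc0, hΨ2 θ hθ]
  rw [← hI1a, ← hI1b, ← hI1c, ← hI2a, ← hI2b, ← hI2c]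
  have hnum1 : -I2c - -I2b = I2b - I2c := by ring
  have hnum2 : -I2b - -I2a = I2a - I2b := by ring
  have hden1 : I1c - I1b = -(I1b - I1c) := by ring
  have hden2 : I1b - I1a = -(I1a - I1b) := by ring
  rw [hnum1, hnum2, hden1, hden2]
  rw [gt_iff_lt, div_neg, div_neg, neg_lt_neg_iff, div_lt_div_iff₀ hP' hP]
  have hQ'ltmQ : I2b - I2c < m * (I2a - I2b) := by linarith
  calc (I2b - I2c) * (I1a - I1b) < (m * (I2a - I2b)) * (I1a - I1b) :=
        mul_lt_mul_of_pos_right hQ'ltmQ hP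
    _ = (I2a - I2b) * (m * (I1a - I1b)) := by ring
    _ = (I2a - I2b) * (I1b - I1c) := by rw [hmP]
end

section
/- For the beta-type function f(x) = (1-x)^{b-1} 1_{(0,1)}(x) with b > 0, and a in a compact subset K of (0,∞), there is a constant C = C(K,b) such that L^f(a,x) ≤ C(1 + |log x|) for all x ∈ (0,1), where L^f(a,x) = (x^{-a}/f(x)) ∫_0^x (ψ_0^f(a) - log y) y^{a-1} f(y) dy and ψ_0^f(a) = (d/da) log M_f(a). -/
set_option maxHeartbeats 1000000
open MeasureTheory Set Real


open MeasureTheory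

/-- The Mellin transform `M_f(a) = ∫_0^∞ x^{a-1} f(x) dx` (as an extended real). -/
noncomputable def mellinP (f : ℝ → ℝ) (a : ℝ) : ENNReal :=
  ∫⁻ x in Set.Ioi (0 : ℝ), ENNReal.ofReal (x ^ (a - 1) * f x)

/-- `ψ_0^f(a) = (d/da) log M_f(a)`. -/
noncomputable def psi0 (f : ℝ → ℝ) (a : ℝ) : ℝ :=
  deriv (fun b => Real.log ((mellinP f b).toReal)) a

/-- `L^f(a,x) = (x^{-a}/f(x)) ∫_0^x (ψ_0^f(a) - log y) y^{a-1} f(y) dy`. -/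
noncomputable def Lf (f : ℝ → ℝ) (a x : ℝ) : ℝ :=
  x ^ (-a) / f x * ∫ y in Set.Ioo (0 : ℝ) x, (psi0 f a - Real.log y) * y ^ (a - 1) * f y

namespace S9
noncomputable def g (b a : ℝ) : ℝ → ℝ := fun y => y ^ (a-1) * (1-y) ^ (b-1)

lemma contOn_g (b a : ℝ) : ContinuousOn (g b a) (Ioo 0 1) := by
  unfold g
  apply ContinuousOn.mul
  · exact continuousOn_id.rpow_const (fun y hy => Or.inl (ne_of_gt hy.1))
  · exact (continuousOn_const.sub continuousOn_id).rpow_const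
      (fun y hy => Or.inl (by show (1:ℝ) - y ≠ 0; intro h; linarith [hy.2, sub_eq_zero.mp h]))

lemma g_nonneg {b a y : ℝ} (hy : y ∈ Ioo (0:ℝ) 1) : 0 ≤ g b a y :=
  mul_nonneg (Real.rpow_nonneg hy.1.le _) (Real.rpow_nonneg (by linarith [hy.2]) _)

lemma asm_g {b a : ℝ} {s : Set ℝ} (hs : MeasurableSet s) (hsub : s ⊆ Ioo 0 1) :
    AEStronglyMeasurable (g b a) (volume.restrict s) :=
  ((contOn_g b a).mono hsub).aestronglyMeasurable hs

lemma asm_log_g {b a c : ℝ} {s : Set ℝ} (hs : MeasurableSet s) (hsub : s ⊆ Ioo 0 1) :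
    AEStronglyMeasurable (fun y => (c - Real.log y) * g b a y) (volume.restrict s) := by
  apply ContinuousOn.aestronglyMeasurable _ hs
  apply ContinuousOn.mono _ hsub
  apply ContinuousOn.mul _ (contOn_g b a)
  exact continuousOn_const.sub (Real.continuousOn_log.mono (fun y hy => ne_of_gt hy.1))

lemma neg_log_le {y c : ℝ} (hy : 0 < y) (hc : 0 < c) : -Real.log y ≤ y ^ (-c) / c := by
  have h1 : Real.log (y ^ (-c)) ≤ y ^ (-c) - 1 := Real.log_le_sub_one_of_pos (rpow_pos_of_pos hy _)
  rw [Real.log_rpow hy] at h1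
  have h2 : (0:ℝ) < y ^ (-c) := rpow_pos_of_pos hy _
  rw [le_div_iff₀ hc]
  nlinarith

lemma half_rpow (c : ℝ) : ((1:ℝ)/2) ^ c = (2:ℝ) ^ (-c) := by
  rw [one_div, Real.rpow_neg (by norm_num), ← Real.inv_rpow (by norm_num)]

-- bound on (1-y)^(b-1) for y ∈ (0, 1/2]
lemma one_sub_rpow_le {b y : ℝ} (h1 : (1:ℝ)/2 ≤ 1 - y) (h2 : 1 - y ≤ 1) :
    (1-y) ^ (b-1) ≤ max 1 ((2:ℝ) ^ (1-b)) := by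
  rcases le_or_gt 1 b with hB | hB
  · exact le_max_of_le_left (Real.rpow_le_one (by linarith) h2 (by linarith))
  · refine le_max_of_le_right ?_
    calc (1-y) ^ (b-1) ≤ ((1:ℝ)/2) ^ (b-1) :=
        Real.rpow_le_rpow_of_nonpos (by norm_num) h1 (by linarith)
      _ = (2:ℝ) ^ (1-b) := by rw [half_rpow]; norm_num

lemma base_rpow_le {a y c : ℝ} (hy0 : (1:ℝ)/2 ≤ y) (hy1 : y ≤ 1) (hac : c ≤ a) :
    y ^ (a-1) ≤ max 1 ((2:ℝ) ^ (1-c)) := by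
  rcases le_or_gt 1 a with hA | hA
  · exact le_max_of_le_left (Real.rpow_le_one (by linarith) hy1 (by linarith))
  · refine le_max_of_le_right ?_
    calc y ^ (a-1) ≤ ((1:ℝ)/2) ^ (a-1) :=
        Real.rpow_le_rpow_of_nonpos (by norm_num) hy0 (by linarith)
      _ = (2:ℝ) ^ (1-a) := by rw [half_rpow]; norm_num
      _ ≤ (2:ℝ) ^ (1-c) := Real.rpow_le_rpow_of_exponent_le (by norm_num) (by linarith)

lemma intOn_log_g {b a : ℝ} (hb : 0 < b) (ha : 0 < a) :
    IntegrableOn (fun y => (1 + |Real.log y|) * g b a y) (Ioo 0 1) := by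
  have hmeas : AEStronglyMeasurable (fun y => (1 + |Real.log y|) * g b a y)
      (volume.restrict (Ioo (0:ℝ) 1)) := by
    apply ContinuousOn.aestronglyMeasurable _ measurableSet_Ioo
    apply ContinuousOn.mul _ (contOn_g b a)
    exact continuousOn_const.add
      ((Real.continuousOn_log.mono (fun y hy => ne_of_gt hy.1)).abs)
  have hsub : Ioo (0:ℝ) 1 ⊆ Ioc 0 (1/2) ∪ Ioo (1/2) 1 := by
    intro y hy
    rcases le_or_gt y (1/2) with h | h
    · exact Or.inl ⟨hy.1, h⟩
    · exact Or.inr ⟨h, hy.2⟩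
  refine IntegrableOn.mono_set (t := Ioc 0 (1/2) ∪ Ioo (1/2) 1) ?_ hsub
  refine IntegrableOn.union ?_ ?_
  · -- dominate by C * y ^ (a/2 - 1)
    set C : ℝ := (1 + 2/a) * max 1 ((2:ℝ) ^ (1-b)) with hC
    have hint : IntegrableOn (fun y : ℝ => C * y ^ (a/2 - 1)) (Ioc 0 (1/2)) :=
      ((intervalIntegral.intervalIntegrable_rpow' (by linarith : (-1:ℝ) < a/2 - 1)).1.const_mul C)
    refine Integrable.mono' hint (AEStronglyMeasurable.mono_set (show Ioc (0:ℝ) (1/2) ⊆ Ioo 0 1 from fun y hy => ⟨hy.1, by linarith [hy.2]⟩) hmeas) ?_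
    filter_upwards [ae_restrict_mem measurableSet_Ioc] with y hy
    have hy0 : 0 < y := hy.1
    have hy1 : y ≤ 1 := by linarith [hy.2]
    have hyI : y ∈ Ioo (0:ℝ) 1 := ⟨hy0, by linarith [hy.2]⟩
    have hlog : Real.log y ≤ 0 := Real.log_nonpos (le_of_lt hy0) hy1
    have habs : |Real.log y| = -Real.log y := abs_of_nonpos hlog
    have h1 : 1 + |Real.log y| ≤ (1 + 2/a) * y ^ (-(a/2)) := by
      have hnl : -Real.log y ≤ y ^ (-(a/2)) / (a/2) := neg_log_le hy0 (by linarith)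
      have hyp : (1:ℝ) ≤ y ^ (-(a/2)) := by
        rw [← Real.rpow_zero y]
        exact Real.rpow_le_rpow_of_exponent_ge hy0 hy1 (by linarith)
      rw [habs]
      have he : y ^ (-(a/2)) / (a/2) = (2/a) * y ^ (-(a/2)) := by
        field_simp
      rw [he] at hnl
      nlinarith
    have h3 : (1-y) ^ (b-1) ≤ max 1 ((2:ℝ) ^ (1-b)) :=
      one_sub_rpow_le (by linarith [hy.2]) (by linarith)
    have hgpos : 0 ≤ g b a y := g_nonneg hyI
    have hyam : 0 ≤ y ^ (a-1) := Real.rpow_nonneg hy0.le _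
    have hbm : 0 ≤ (1-y) ^ (b-1) := Real.rpow_nonneg (by linarith [hy.2]) _
    have hfin : (1 + |Real.log y|) * g b a y ≤ C * y ^ (a/2 - 1) := by
      have e1 : y ^ (-(a/2)) * y ^ (a-1) = y ^ (a/2 - 1) := by
        rw [← Real.rpow_add hy0]; congr 1; ring
      calc (1 + |Real.log y|) * g b a y
          ≤ ((1 + 2/a) * y ^ (-(a/2))) * (y ^ (a-1) * max 1 ((2:ℝ) ^ (1-b))) := by
            apply mul_le_mul h1 (mul_le_mul_of_nonneg_left h3 hyam) hgpos
            positivity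
        _ = C * (y ^ (-(a/2)) * y ^ (a-1)) := by rw [hC]; ring
        _ = C * y ^ (a/2 - 1) := by rw [e1]
    rw [Real.norm_eq_abs, abs_of_nonneg (by positivity)]
    exact hfin
  · -- dominate by C' * (1-y)^(b-1)
    set C' : ℝ := 2 * max 1 ((2:ℝ) ^ (1-a)) with hC'
    have hint0 : IntervalIntegrable (fun y : ℝ => ((1:ℝ) - y) ^ (b-1)) volume (1/2) 1 := by
      have h := intervalIntegral.intervalIntegrable_rpow' (a := 0) (b := 1/2)
        (by linarith : (-1:ℝ) < b - 1)
      have h2 := h.comp_sub_left 1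
      norm_num at h2
      exact h2.symm
    have hint : IntegrableOn (fun y : ℝ => C' * (1-y) ^ (b-1)) (Ioo (1/2) 1) := by
      refine IntegrableOn.mono_set ?_ Ioo_subset_Ioc_self
      exact (hint0.1.const_mul C')
    refine Integrable.mono' hint (AEStronglyMeasurable.mono_set (show Ioo (1/2:ℝ) 1 ⊆ Ioo 0 1 from fun y hy => ⟨by linarith [hy.1], hy.2⟩) hmeas) ?_
    filter_upwards [ae_restrict_mem measurableSet_Ioo] with y hy
    have hy0 : (0:ℝ) < y := by linarith [hy.1]
    have hyI : y ∈ Ioo (0:ℝ) 1 := ⟨hy0, hy.2⟩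
    have hlog : |Real.log y| ≤ 1 := by
      rw [abs_of_nonpos (Real.log_nonpos hy0.le hy.2.le)]
      have hrw : -Real.log y = Real.log (1/y) := by
        rw [Real.log_div one_ne_zero (ne_of_gt hy0)]; simp
      rw [hrw]
      have h2 : 1/y ≤ 2 := by rw [div_le_iff₀ hy0]; linarith [hy.1]
      calc Real.log (1/y) ≤ Real.log 2 := Real.log_le_log (by positivity) h2
        _ ≤ 1 := by linarith [Real.log_two_lt_d9]
    have hya : y ^ (a-1) ≤ max 1 ((2:ℝ) ^ (1-a)) := base_rpow_le hy.1.le hy.2.le le_rfl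
    have hbm : 0 ≤ (1-y) ^ (b-1) := Real.rpow_nonneg (by linarith [hy.2]) _
    rw [Real.norm_eq_abs, abs_of_nonneg]
    · show (1 + |Real.log y|) * g b a y ≤ C' * (1-y) ^ (b-1)
      unfold g
      calc (1 + |Real.log y|) * (y ^ (a-1) * (1-y) ^ (b-1))
          ≤ 2 * (max 1 ((2:ℝ) ^ (1-a)) * (1-y) ^ (b-1)) := by
            apply mul_le_mul (by linarith) (mul_le_mul_of_nonneg_right hya hbm) ?_ (by norm_num)
            · exact mul_nonneg (Real.rpow_nonneg hy0.le _) hbm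
        _ = C' * (1-y) ^ (b-1) := by rw [hC']; ring
    · have hg := g_nonneg (a := a) (b := b) hyI
      positivity

end S9

namespace S9
open Metric in
noncomputable def Bf (b a : ℝ) : ℝ := ∫ y in Ioo (0:ℝ) 1, g b a y
noncomputable def Bg (b a : ℝ) : ℝ := ∫ y in Ioo (0:ℝ) 1, Real.log y * g b a y

lemma intOn_g {b a : ℝ} (hb : 0 < b) (ha : 0 < a) : IntegrableOn (g b a) (Ioo 0 1) := by
  refine Integrable.mono' (intOn_log_g hb ha) (asm_g measurableSet_Ioo subset_rfl) ?_
  filter_upwards [ae_restrict_mem measurableSet_Ioo] with y hy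
  have h0 : 0 ≤ g b a y := g_nonneg hy
  rw [Real.norm_eq_abs, abs_of_nonneg h0]
  nlinarith [abs_nonneg (Real.log y)]

lemma intOn_lg {b a : ℝ} (hb : 0 < b) (ha : 0 < a) :
    IntegrableOn (fun y => Real.log y * g b a y) (Ioo 0 1) := by
  refine Integrable.mono' (intOn_log_g hb ha) ?_ ?_
  · apply ContinuousOn.aestronglyMeasurable _ measurableSet_Ioo
    exact ((Real.continuousOn_log.mono (fun y hy => ne_of_gt hy.1))).mul (contOn_g b a)
  · filter_upwards [ae_restrict_mem measurableSet_Ioo] with y hy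
    have h0 : 0 ≤ g b a y := g_nonneg hy
    rw [Real.norm_eq_abs, abs_mul, abs_of_nonneg h0]
    nlinarith [abs_nonneg (Real.log y)]

lemma intOn_cg {b a : ℝ} (hb : 0 < b) (ha : 0 < a) (c : ℝ) :
    IntegrableOn (fun y => (c - Real.log y) * g b a y) (Ioo 0 1) := by
  have h := ((intOn_g hb ha).const_mul c).sub (intOn_lg hb ha)
  have heq : (fun y => (c - Real.log y) * g b a y)
      = (fun y : ℝ => c * g b a y) - (fun y => Real.log y * g b a y) := by
    funext y; simp only [Pi.sub_apply]; ring
  rw [heq]; exact h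

lemma quarter_rpow (c : ℝ) : ((1:ℝ)/4) ^ c = (4:ℝ) ^ (-c) := by
  rw [one_div, Real.rpow_neg (by norm_num), ← Real.inv_rpow (by norm_num)]

lemma rpow_lower {y a a1 : ℝ} (hy0 : (1:ℝ)/4 ≤ y) (hy1 : y ≤ 1) (ha1 : a ≤ a1) :
    min 1 ((4:ℝ)^(1-a1)) ≤ y ^ (a-1) := by
  have hy0' : (0:ℝ) < y := by linarith
  rcases le_or_gt 1 a with hA | hA
  · refine le_trans (min_le_right _ _) ?_
    calc (4:ℝ)^(1-a1) ≤ (4:ℝ)^(1-a) :=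
          Real.rpow_le_rpow_of_exponent_le (by norm_num) (by linarith)
      _ = ((1:ℝ)/4) ^ (a-1) := by rw [quarter_rpow]; norm_num
      _ ≤ y ^ (a-1) := Real.rpow_le_rpow (by norm_num) hy0 (by linarith)
  · refine le_trans (min_le_left _ _) ?_
    have := Real.rpow_le_rpow_of_nonpos hy0' hy1 (by linarith : a - 1 ≤ 0)
    rwa [Real.one_rpow] at this

lemma one_sub_rpow_lower {b y : ℝ} (h1 : (1:ℝ)/2 ≤ 1 - y) (h2 : 1 - y ≤ 1) :
    min 1 ((2:ℝ)^(1-b)) ≤ (1-y) ^ (b-1) := by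
  rcases le_or_gt 1 b with hB | hB
  · refine le_trans (min_le_right _ _) ?_
    calc (2:ℝ)^(1-b) = ((1:ℝ)/2) ^ (b-1) := by rw [half_rpow]; norm_num
      _ ≤ (1-y) ^ (b-1) := Real.rpow_le_rpow (by norm_num) h1 (by linarith)
  · refine le_trans (min_le_left _ _) ?_
    have := Real.rpow_le_rpow_of_nonpos (by linarith : (0:ℝ) < 1 - y) h2 (by linarith : b - 1 ≤ 0)
    rwa [Real.one_rpow] at this

lemma Bf_lower {b a a1 : ℝ} (hb : 0 < b) (ha : 0 < a) (ha1 : a ≤ a1) :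
    (min 1 ((4:ℝ)^(1-a1)) * min 1 ((2:ℝ)^(1-b))) * (4:ℝ)⁻¹ ≤ Bf b a := by
  set c : ℝ := min 1 ((4:ℝ)^(1-a1)) * min 1 ((2:ℝ)^(1-b)) with hc
  have hsub : Ioc (1/4:ℝ) (1/2) ⊆ Ioo 0 1 := fun y hy => ⟨by linarith [hy.1], by linarith [hy.2]⟩
  have hint : IntegrableOn (g b a) (Ioc (1/4:ℝ) (1/2)) := (intOn_g hb ha).mono_set hsub
  have h1 : c * (volume (Ioc (1/4:ℝ) (1/2))).toReal ≤ ∫ y in Ioc (1/4:ℝ) (1/2), g b a y := by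
    rw [mul_comm, ← smul_eq_mul]
    refine setIntegral_ge_of_const_le measurableSet_Ioc (by simp) ?_ hint
    intro y hy
    have h2 : min 1 ((4:ℝ)^(1-a1)) ≤ y ^ (a-1) := rpow_lower hy.1.le (by linarith [hy.2]) ha1
    have h3 : min 1 ((2:ℝ)^(1-b)) ≤ (1-y) ^ (b-1) :=
      one_sub_rpow_lower (by linarith [hy.2]) (by linarith [hy.1])
    have hm1 : (0:ℝ) ≤ min 1 ((4:ℝ)^(1-a1)) := le_min (by norm_num) (Real.rpow_nonneg (by norm_num) _)
    have hm2 : (0:ℝ) ≤ min 1 ((2:ℝ)^(1-b)) := le_min (by norm_num) (Real.rpow_nonneg (by norm_num) _)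
    have hyam : (0:ℝ) ≤ y ^ (a-1) := Real.rpow_nonneg (by linarith [hy.1]) _
    exact mul_le_mul h2 h3 hm2 hyam
  have h4 : ∫ y in Ioc (1/4:ℝ) (1/2), g b a y ≤ Bf b a := by
    refine setIntegral_mono_set (intOn_g hb ha) ?_ (HasSubset.Subset.eventuallyLE hsub)
    filter_upwards [ae_restrict_mem measurableSet_Ioo] with y hy using g_nonneg hy
  have hvol : (volume (Ioc (1/4:ℝ) (1/2))).toReal = 4⁻¹ := by
    rw [Real.volume_Ioc, ENNReal.toReal_ofReal (by norm_num)]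
    norm_num
  rw [hvol] at h1
  linarith

lemma hasDerivAt_Bf {b a : ℝ} (hb : 0 < b) (ha : 0 < a) : HasDerivAt (Bf b) (Bg b a) a := by
  have key := hasDerivAt_integral_of_dominated_loc_of_deriv_le
    (μ := volume.restrict (Ioo (0:ℝ) 1)) (F := fun t => g b t)
    (F' := fun t y => Real.log y * g b t y)
    (bound := fun y => (1 + |Real.log y|) * g b (a/2) y)
    (x₀ := a) (s := Metric.ball a (a/2)) (Metric.ball_mem_nhds a (by linarith))
    (Filter.Eventually.of_forall (fun t => asm_g measurableSet_Ioo subset_rfl))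
    (intOn_g hb ha)
    ?_ ?_ (intOn_log_g hb (by linarith)) ?_
  · exact key.2
  · apply ContinuousOn.aestronglyMeasurable _ measurableSet_Ioo
    exact ((Real.continuousOn_log.mono (fun y hy => ne_of_gt hy.1))).mul (contOn_g b a)
  · filter_upwards [ae_restrict_mem measurableSet_Ioo] with y hy t ht
    have hy0 : 0 < y := hy.1
    have hy1 : y ≤ 1 := hy.2.le
    have hsub2 : 0 ≤ (1:ℝ) - y := by linarith [hy.2]
    have hball : |t - a| < a/2 := by simpa [Metric.mem_ball, Real.dist_eq] using ht
    have ht2 : a/2 - 1 ≤ t - 1 := by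
      have := abs_lt.mp hball
      linarith [this.1]
    have hle : y ^ (t-1) ≤ y ^ (a/2-1) := Real.rpow_le_rpow_of_exponent_ge hy0 hy1 ht2
    rw [Real.norm_eq_abs, abs_mul]
    have hgle : g b t y ≤ g b (a/2) y := by
      unfold g
      exact mul_le_mul_of_nonneg_right hle (Real.rpow_nonneg hsub2 _)
    have hgt : 0 ≤ g b t y := mul_nonneg (Real.rpow_nonneg hy0.le _) (Real.rpow_nonneg hsub2 _)
    rw [abs_of_nonneg hgt]
    have hg2 : 0 ≤ g b (a/2) y := mul_nonneg (Real.rpow_nonneg hy0.le _) (Real.rpow_nonneg hsub2 _)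
    nlinarith [abs_nonneg (Real.log y)]
  · filter_upwards [ae_restrict_mem measurableSet_Ioo] with y hy t ht
    have hy0 : 0 < y := hy.1
    have h0 : HasDerivAt (fun s : ℝ => y ^ s) (y ^ (t-1) * Real.log y) (t-1) :=
      (Real.hasStrictDerivAt_const_rpow hy0 (t-1)).hasDerivAt
    have h1 : HasDerivAt (fun t : ℝ => y ^ (t-1)) (y ^ (t-1) * Real.log y * 1) t :=
      HasDerivAt.comp t h0 ((hasDerivAt_id t).sub_const 1)
    have h2 := h1.mul_const ((1-y) ^ (b-1))
    have : y ^ (t-1) * Real.log y * 1 * (1-y) ^ (b-1) = Real.log y * g b t y := by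
      unfold g; ring
    rw [this] at h2
    exact h2

end S9

namespace S9

lemma mellin_eq {b t : ℝ} (hb : 0 < b) (ht : 0 < t) :
    mellinP (Set.indicator (Ioo (0:ℝ) 1) (fun x => (1-x) ^ (b-1))) t
      = ENNReal.ofReal (Bf b t) := by
  unfold mellinP
  have hpt : ∀ x : ℝ, ENNReal.ofReal (x ^ (t-1) *
      Set.indicator (Ioo (0:ℝ) 1) (fun x => (1-x) ^ (b-1)) x)
      = Set.indicator (Ioo (0:ℝ) 1) (fun x => ENNReal.ofReal (g b t x)) x := by
    intro x
    by_cases hx : x ∈ Ioo (0:ℝ) 1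
    · rw [Set.indicator_of_mem hx, Set.indicator_of_mem hx]; rfl
    · rw [Set.indicator_of_notMem hx, Set.indicator_of_notMem hx, mul_zero, ENNReal.ofReal_zero]
  simp_rw [hpt]
  rw [lintegral_indicator measurableSet_Ioo, Measure.restrict_restrict measurableSet_Ioo,
    Set.inter_eq_left.mpr (fun y hy => hy.1)]
  rw [← ofReal_integral_eq_lintegral_ofReal (intOn_g hb ht)]
  · rfl
  · filter_upwards [ae_restrict_mem measurableSet_Ioo] with y hy using g_nonneg hy

lemma Bf_nonneg (b t : ℝ) : 0 ≤ Bf b t :=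
  setIntegral_nonneg measurableSet_Ioo (fun y hy => g_nonneg hy)

lemma Bf_pos {b a : ℝ} (hb : 0 < b) (ha : 0 < a) : 0 < Bf b a := by
  have h := Bf_lower hb ha (le_refl a)
  have h1 : (0:ℝ) < min 1 ((4:ℝ)^(1-a)) := lt_min one_pos (Real.rpow_pos_of_pos (by norm_num) _)
  have h2 : (0:ℝ) < min 1 ((2:ℝ)^(1-b)) := lt_min one_pos (Real.rpow_pos_of_pos (by norm_num) _)
  nlinarith

end S9

namespace S9

lemma toReal_mellin {b t : ℝ} (hb : 0 < b) (ht : 0 < t) :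
    ((mellinP (Set.indicator (Ioo (0:ℝ) 1) (fun x => (1-x) ^ (b-1))) t).toReal) = Bf b t := by
  rw [mellin_eq hb ht, ENNReal.toReal_ofReal (Bf_nonneg b t)]

lemma psi0_eq {b a : ℝ} (hb : 0 < b) (ha : 0 < a) :
    psi0 (Set.indicator (Ioo (0:ℝ) 1) (fun x => (1-x) ^ (b-1))) a = Bg b a / Bf b a := by
  unfold psi0
  have hev : (fun t => Real.log ((mellinP
      (Set.indicator (Ioo (0:ℝ) 1) (fun x => (1-x) ^ (b-1))) t).toReal))
      =ᶠ[nhds a] (fun t => Real.log (Bf b t)) := by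
    filter_upwards [IsOpen.mem_nhds isOpen_Ioi ha] with t ht
    rw [toReal_mellin hb ht]
  rw [Filter.EventuallyEq.deriv_eq hev]
  exact ((hasDerivAt_Bf hb ha).log (Bf_pos hb ha).ne').deriv

lemma cancel {b a : ℝ} (hb : 0 < b) (ha : 0 < a) :
    ∫ y in Ioo (0:ℝ) 1,
      (psi0 (Set.indicator (Ioo (0:ℝ) 1) (fun x => (1-x) ^ (b-1))) a - Real.log y) * y ^ (a-1)
        * Set.indicator (Ioo (0:ℝ) 1) (fun x => (1-x) ^ (b-1)) y = 0 := by
  set c := psi0 (Set.indicator (Ioo (0:ℝ) 1) (fun x => (1-x) ^ (b-1))) a with hcdef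
  have h1 : ∫ y in Ioo (0:ℝ) 1,
      (c - Real.log y) * y ^ (a-1) * Set.indicator (Ioo (0:ℝ) 1) (fun x => (1-x) ^ (b-1)) y
      = ∫ y in Ioo (0:ℝ) 1, (c - Real.log y) * g b a y := by
    refine setIntegral_congr_fun measurableSet_Ioo (fun y hy => ?_)
    rw [Set.indicator_of_mem hy]
    unfold g; ring
  rw [h1]
  have h2 : ∫ y in Ioo (0:ℝ) 1, (c - Real.log y) * g b a y
      = c * Bf b a - Bg b a := by
    have h3 : ∀ y : ℝ, (c - Real.log y) * g b a y = c * g b a y - Real.log y * g b a y := by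
      intro y; ring
    simp_rw [h3]
    rw [integral_sub ((intOn_g hb ha).const_mul c) (intOn_lg hb ha), integral_const_mul]
    rfl
  rw [h2, hcdef, psi0_eq hb ha, div_mul_cancel₀ _ (Bf_pos hb ha).ne']
  ring

end S9

namespace S9

noncomputable def fB (b : ℝ) : ℝ → ℝ := Set.indicator (Ioo (0:ℝ) 1) (fun x => (1-x) ^ (b-1))

lemma cancel' {b a : ℝ} (hb : 0 < b) (ha : 0 < a) :
    ∫ y in Ioo (0:ℝ) 1, (psi0 (fB b) a - Real.log y) * g b a y = 0 := by
  have h := cancel hb ha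
  have h1 : ∫ y in Ioo (0:ℝ) 1,
      (psi0 (fB b) a - Real.log y) * y ^ (a-1) * fB b y
      = ∫ y in Ioo (0:ℝ) 1, (psi0 (fB b) a - Real.log y) * g b a y := by
    refine setIntegral_congr_fun measurableSet_Ioo (fun y hy => ?_)
    show _ * _ * (Set.indicator _ _ y) = _
    rw [Set.indicator_of_mem hy]
    unfold g; ring
  rw [← h1]
  exact h

lemma integral_rpow_Ioo {c x : ℝ} (hc : 0 < c) (hx : 0 < x) :
    ∫ y in Ioo (0:ℝ) x, y ^ (c-1) = x ^ c / c := by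
  rw [← integral_Ioc_eq_integral_Ioo, ← intervalIntegral.integral_of_le hx.le]
  rw [integral_rpow (Or.inl (by linarith))]
  rw [Real.zero_rpow (by linarith : c - 1 + 1 ≠ 0)]
  norm_num

lemma integral_one_sub_rpow {b x : ℝ} (hb : 0 < b) (hx : x < 1) :
    ∫ y in Ico x 1, ((1:ℝ)-y) ^ (b-1) = (1-x) ^ b / b := by
  rw [integral_Ico_eq_integral_Ioo, ← integral_Ioc_eq_integral_Ioo,
    ← intervalIntegral.integral_of_le hx.le]
  have h := intervalIntegral.integral_comp_sub_left (a := x) (b := 1)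
    (fun y : ℝ => y ^ (b-1)) 1
  rw [h]
  norm_num
  rw [integral_rpow (Or.inl (by linarith))]
  rw [Real.zero_rpow (by linarith : b - 1 + 1 ≠ 0)]
  norm_num

end S9

namespace S9

lemma g_mono {b a a0 y : ℝ} (hy : y ∈ Ioo (0:ℝ) 1) (h : a0 ≤ a) : g b a y ≤ g b a0 y := by
  unfold g
  exact mul_le_mul_of_nonneg_right
    (Real.rpow_le_rpow_of_exponent_ge hy.1 hy.2.le (by linarith))
    (Real.rpow_nonneg (by linarith [hy.2]) _)

lemma psi0_abs_le {b a a0 a1 : ℝ} (hb : 0 < b) (h0 : 0 < a0) (hA : a0 ≤ a) (hB : a ≤ a1) :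
    |psi0 (fB b) a| ≤ (∫ y in Ioo (0:ℝ) 1, (1 + |Real.log y|) * g b a0 y)
      / ((min 1 ((4:ℝ)^(1-a1)) * min 1 ((2:ℝ)^(1-b))) * (4:ℝ)⁻¹) := by
  have ha : 0 < a := lt_of_lt_of_le h0 hA
  have hpsi : psi0 (fB b) a = Bg b a / Bf b a := psi0_eq hb ha
  set c3 : ℝ := (min 1 ((4:ℝ)^(1-a1)) * min 1 ((2:ℝ)^(1-b))) * (4:ℝ)⁻¹ with hc3
  have hc3pos : 0 < c3 := by
    have h1 : (0:ℝ) < min 1 ((4:ℝ)^(1-a1)) := lt_min one_pos (Real.rpow_pos_of_pos (by norm_num) _)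
    have h2 : (0:ℝ) < min 1 ((2:ℝ)^(1-b)) := lt_min one_pos (Real.rpow_pos_of_pos (by norm_num) _)
    positivity
  have hBf : c3 ≤ Bf b a := Bf_lower hb ha hB
  have hBg : |Bg b a| ≤ ∫ y in Ioo (0:ℝ) 1, (1 + |Real.log y|) * g b a0 y := by
    have h1 : |Bg b a| ≤ ∫ y in Ioo (0:ℝ) 1, ‖Real.log y * g b a y‖ := by
      rw [← Real.norm_eq_abs]
      exact norm_integral_le_integral_norm _
    refine h1.trans (setIntegral_mono_on ((intOn_lg hb ha).norm) (intOn_log_g hb h0)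
      measurableSet_Ioo (fun y hy => ?_))
    have hg0 : 0 ≤ g b a y := g_nonneg hy
    have hg1 : g b a y ≤ g b a0 y := g_mono hy hA
    rw [Real.norm_eq_abs, abs_mul, abs_of_nonneg hg0]
    nlinarith [abs_nonneg (Real.log y)]
  rw [hpsi, abs_div, abs_of_pos (Bf_pos hb ha)]
  exact div_le_div₀ (le_trans (abs_nonneg _) hBg) hBg hc3pos hBf

end S9

namespace S9

lemma fB_inv_le {b x : ℝ} (hb : 0 < b) (hx : x ∈ Ioo (0:ℝ) 1) (hx2 : x ≤ 1/2) :
    (fB b x)⁻¹ ≤ max 1 ((2:ℝ)^(b-1)) := by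
  unfold fB
  rw [Set.indicator_of_mem hx]
  rw [← Real.rpow_neg (by linarith [hx.2] : (0:ℝ) ≤ 1 - x)]
  have h2 := one_sub_rpow_le (b := 2-b) (y := x) (by linarith) (by linarith [hx.1])
  have e1 : (2-b)-1 = -(b-1) := by ring
  have e2 : 1-(2-b) = b-1 := by ring
  rw [e1, e2] at h2
  exact h2

lemma case_small {b a M x : ℝ} (hb : 0 < b) (ha : 0 < a) (hx : x ∈ Ioo (0:ℝ) 1) (hx2 : x ≤ 1/2)
    (hM : |psi0 (fB b) a| ≤ M) :
    Lf (fB b) a x ≤ (max 1 ((2:ℝ)^(b-1)) * max 1 ((2:ℝ)^(1-b))) * ((M - Real.log x)/a + 4/a^2) := by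
  set P := psi0 (fB b) a with hP
  set c1 : ℝ := max 1 ((2:ℝ)^(b-1)) with hc1
  set c2 : ℝ := max 1 ((2:ℝ)^(1-b)) with hc2
  have hc1p : (0:ℝ) < c1 := lt_of_lt_of_le one_pos (le_max_left _ _)
  have hc2p : (0:ℝ) < c2 := lt_of_lt_of_le one_pos (le_max_left _ _)
  have hMpos : 0 ≤ M := le_trans (abs_nonneg _) hM
  have hlogx : Real.log x ≤ 0 := Real.log_nonpos hx.1.le hx.2.le
  have hsub : Ioo (0:ℝ) x ⊆ Ioo 0 1 := fun y hy => ⟨hy.1, lt_trans hy.2 hx.2⟩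
  -- rewrite the integral with g
  have hI1 : (∫ y in Ioo (0:ℝ) x, (P - Real.log y) * y ^ (a-1) * fB b y)
      = ∫ y in Ioo (0:ℝ) x, (P - Real.log y) * g b a y := by
    refine setIntegral_congr_fun measurableSet_Ioo (fun y hy => ?_)
    show _ * _ * (Set.indicator _ _ y) = _
    rw [Set.indicator_of_mem (hsub hy)]
    unfold g; ring
  -- bound function
  set φ : ℝ → ℝ := fun y => c2 * ((M - Real.log x) * y ^ (a-1) + (2/a) * x ^ (a/2) * y ^ (a/2-1))
    with hφ
  have hφint : IntegrableOn φ (Ioo (0:ℝ) x) := by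
    apply Integrable.const_mul
    apply Integrable.add
    · apply Integrable.const_mul
      exact (intervalIntegral.intervalIntegrable_rpow'
        (by linarith : (-1:ℝ) < a - 1) (a := 0) (b := x)).1.mono_set Ioo_subset_Ioc_self
    · apply Integrable.const_mul
      exact (intervalIntegral.intervalIntegrable_rpow'
        (by linarith : (-1:ℝ) < a/2 - 1) (a := 0) (b := x)).1.mono_set Ioo_subset_Ioc_self
  have hptwise : ∀ y ∈ Ioo (0:ℝ) x, (P - Real.log y) * g b a y ≤ φ y := by
    intro y hy
    have hy0 : 0 < y := hy.1
    have hyx : y < x := hy.2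
    have hy1 : y < 1 := lt_trans hyx hx.2
    have hfle : (1-y) ^ (b-1) ≤ c2 := one_sub_rpow_le (by linarith) (by linarith)
    have hyam : (0:ℝ) ≤ y ^ (a-1) := Real.rpow_nonneg hy0.le _
    have hlog2 : -Real.log y ≤ -Real.log x + (2/a) * x ^ (a/2) * y ^ (-(a/2)) := by
      have hyx' : 0 < y / x := div_pos hy0 hx.1
      have h1 : -Real.log (y/x) ≤ (y/x) ^ (-(a/2)) / (a/2) := neg_log_le hyx' (by linarith)
      have h2 : (y/x) ^ (-(a/2)) = y ^ (-(a/2)) * x ^ (a/2) := by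
        rw [Real.div_rpow hy0.le hx.1.le, Real.rpow_neg hx.1.le, div_eq_mul_inv, inv_inv]
      rw [Real.log_div hy0.ne' hx.1.ne'] at h1
      rw [h2] at h1
      have h3 : (y ^ (-(a/2)) * x ^ (a/2)) / (a/2) = (2/a) * x ^ (a/2) * y ^ (-(a/2)) := by
        field_simp
      rw [h3] at h1
      linarith
    have hPb : P ≤ M := le_trans (le_abs_self _) hM
    have e1 : y ^ (-(a/2)) * y ^ (a-1) = y ^ (a/2-1) := by
      rw [← Real.rpow_add hy0]; congr 1; ring
    have hcomb : (P - Real.log y) * y ^ (a-1)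
        ≤ (M - Real.log x) * y ^ (a-1) + (2/a) * x ^ (a/2) * y ^ (a/2-1) := by
      have h4 : P - Real.log y ≤ (M - Real.log x) + (2/a) * x ^ (a/2) * y ^ (-(a/2)) := by
        linarith
      have h5 := mul_le_mul_of_nonneg_right h4 hyam
      calc (P - Real.log y) * y ^ (a-1)
          ≤ ((M - Real.log x) + (2/a) * x ^ (a/2) * y ^ (-(a/2))) * y ^ (a-1) := h5
        _ = (M - Real.log x) * y ^ (a-1) + (2/a) * x ^ (a/2) * (y ^ (-(a/2)) * y ^ (a-1)) := by ring
        _ = (M - Real.log x) * y ^ (a-1) + (2/a) * x ^ (a/2) * y ^ (a/2-1) := by rw [e1]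
    -- combine with (1-y)^(b-1) ≤ c2
    have hgy : g b a y = y ^ (a-1) * (1-y) ^ (b-1) := rfl
    rcases le_or_gt (P - Real.log y) 0 with hneg | hpos
    · have : (P - Real.log y) * g b a y ≤ 0 :=
        mul_nonpos_of_nonpos_of_nonneg hneg (g_nonneg ⟨hy0, hy1⟩)
      refine this.trans ?_
      have t1 : (0:ℝ) ≤ (M - Real.log x) * y ^ (a-1) :=
        mul_nonneg (by linarith) hyam
      have t2 : (0:ℝ) ≤ (2/a) * x ^ (a/2) * y ^ (a/2-1) :=
        mul_nonneg (mul_nonneg (by positivity) (Real.rpow_nonneg hx.1.le _))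
          (Real.rpow_nonneg hy0.le _)
      exact mul_nonneg hc2p.le (add_nonneg t1 t2)
    · calc (P - Real.log y) * g b a y
          = (P - Real.log y) * y ^ (a-1) * (1-y) ^ (b-1) := by rw [hgy]; ring
        _ ≤ (P - Real.log y) * y ^ (a-1) * c2 := by
            apply mul_le_mul_of_nonneg_left hfle
            exact mul_nonneg hpos.le hyam
        _ ≤ ((M - Real.log x) * y ^ (a-1) + (2/a) * x ^ (a/2) * y ^ (a/2-1)) * c2 :=
            mul_le_mul_of_nonneg_right hcomb hc2p.le
        _ = φ y := by rw [hφ]; ring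
  have hIle : (∫ y in Ioo (0:ℝ) x, (P - Real.log y) * g b a y) ≤ ∫ y in Ioo (0:ℝ) x, φ y :=
    setIntegral_mono_on ((intOn_cg hb ha P).mono_set hsub) hφint measurableSet_Ioo hptwise
  have hφval : (∫ y in Ioo (0:ℝ) x, φ y)
      = c2 * ((M - Real.log x) * (x ^ a / a) + (2/a) * x ^ (a/2) * (x ^ (a/2) / (a/2))) := by
    rw [hφ, integral_const_mul, integral_add, integral_const_mul, integral_const_mul,
      integral_rpow_Ioo ha hx.1, integral_rpow_Ioo (by linarith : (0:ℝ) < a/2) hx.1]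
    · exact Integrable.const_mul ((intervalIntegral.intervalIntegrable_rpow'
        (by linarith : (-1:ℝ) < a - 1) (a := 0) (b := x)).1.mono_set Ioo_subset_Ioc_self) _
    · exact Integrable.const_mul ((intervalIntegral.intervalIntegrable_rpow'
        (by linarith : (-1:ℝ) < a/2 - 1) (a := 0) (b := x)).1.mono_set Ioo_subset_Ioc_self) _
  -- put it together
  unfold Lf
  have hfB : (fB b) x = (1-x) ^ (b-1) := Set.indicator_of_mem hx _
  have hxma : (0:ℝ) < x ^ (-a) := Real.rpow_pos_of_pos hx.1 _
  have hfBpos : (0:ℝ) < fB b x := by rw [hfB]; exact Real.rpow_pos_of_pos (by linarith [hx.2]) _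
  have hfac : (0:ℝ) ≤ x ^ (-a) / fB b x := le_of_lt (div_pos hxma hfBpos)
  rw [show (∫ y in Ioo (0:ℝ) x, (P - Real.log y) * y ^ (a-1) * fB b y)
      = ∫ y in Ioo (0:ℝ) x, (P - Real.log y) * g b a y from hI1]
  calc x ^ (-a) / fB b x * ∫ y in Ioo (0:ℝ) x, (P - Real.log y) * g b a y
      ≤ x ^ (-a) / fB b x * (c2 * ((M - Real.log x) * (x ^ a / a)
          + (2/a) * x ^ (a/2) * (x ^ (a/2) / (a/2)))) := by
        apply mul_le_mul_of_nonneg_left _ hfac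
        rw [← hφval]; exact hIle
    _ = (x ^ (-a) * (fB b x)⁻¹) * (c2 * ((M - Real.log x) * (x ^ a / a)
          + (2/a) * x ^ (a/2) * (x ^ (a/2) / (a/2)))) := by ring
    _ ≤ (c1 * c2) * ((M - Real.log x)/a + 4/a^2) := by
        have hinv : (fB b x)⁻¹ ≤ c1 := fB_inv_le hb hx hx2
        have hxx : x ^ (a/2) * x ^ (a/2) = x ^ a := by
          rw [← Real.rpow_add hx.1]; congr 1; ring
        have hxax : x ^ (-a) * x ^ a = 1 := by
          rw [← Real.rpow_add hx.1]; simp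
        have ha0 : a ≠ 0 := ne_of_gt ha
        have h2nd : (2/a) * x ^ (a/2) * (x ^ (a/2) / (a/2)) = x ^ a * (4/a^2) := by
          have hr : (2/a) * x ^ (a/2) * (x ^ (a/2) / (a/2))
              = (x ^ (a/2) * x ^ (a/2)) * ((2/a) / (a/2)) := by ring
          rw [hr, hxx]
          congr 1
          field_simp
          ring
        have expand : c2 * ((M - Real.log x) * (x ^ a / a)
            + (2/a) * x ^ (a/2) * (x ^ (a/2) / (a/2)))
            = x ^ a * (c2 * ((M - Real.log x)/a + 4/a^2)) := by
          rw [h2nd]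
          field_simp
        rw [expand]
        have hbody : (0:ℝ) ≤ c2 * ((M - Real.log x)/a + 4/a^2) := by
          have : (0:ℝ) ≤ (M - Real.log x)/a := div_nonneg (by linarith) ha.le
          have h4 : (0:ℝ) ≤ 4/a^2 := by positivity
          positivity
        calc (x ^ (-a) * (fB b x)⁻¹) * (x ^ a * (c2 * ((M - Real.log x)/a + 4/a^2)))
            = ((x ^ (-a) * x ^ a) * (fB b x)⁻¹) * (c2 * ((M - Real.log x)/a + 4/a^2)) := by ring
          _ = (fB b x)⁻¹ * (c2 * ((M - Real.log x)/a + 4/a^2)) := by rw [hxax]; ring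
          _ ≤ c1 * (c2 * ((M - Real.log x)/a + 4/a^2)) :=
              mul_le_mul_of_nonneg_right hinv hbody
          _ = (c1 * c2) * ((M - Real.log x)/a + 4/a^2) := by ring

end S9

namespace S9

lemma case_large {b a a0 a1 M x : ℝ} (hb : 0 < b) (h0 : 0 < a0) (hA : a0 ≤ a) (hB : a ≤ a1)
    (hx : x ∈ Ioo (0:ℝ) 1) (hx2 : (1:ℝ)/2 ≤ x)
    (hM : |psi0 (fB b) a| ≤ M) :
    Lf (fB b) a x ≤ (2:ℝ) ^ a1 * ((M + 1) * max 1 ((2:ℝ)^(1-a0))) / b := by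
  have ha : 0 < a := lt_of_lt_of_le h0 hA
  set P := psi0 (fB b) a with hP
  set c4 : ℝ := max 1 ((2:ℝ)^(1-a0)) with hc4
  have hc4p : (0:ℝ) < c4 := lt_of_lt_of_le one_pos (le_max_left _ _)
  have hMpos : 0 ≤ M := le_trans (abs_nonneg _) hM
  have hsub : Ioo (0:ℝ) x ⊆ Ioo 0 1 := fun y hy => ⟨hy.1, lt_trans hy.2 hx.2⟩
  have hsub2 : Ico x 1 ⊆ Ioo (0:ℝ) 1 := fun y hy => ⟨lt_of_lt_of_le (by linarith) hy.1, hy.2⟩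
  -- rewrite the integral with g
  have hI1 : (∫ y in Ioo (0:ℝ) x, (P - Real.log y) * y ^ (a-1) * fB b y)
      = ∫ y in Ioo (0:ℝ) x, (P - Real.log y) * g b a y := by
    refine setIntegral_congr_fun measurableSet_Ioo (fun y hy => ?_)
    show _ * _ * (Set.indicator _ _ y) = _
    rw [Set.indicator_of_mem (hsub hy)]
    unfold g; ring
  -- split the full integral
  have hunion : Ioo (0:ℝ) x ∪ Ico x 1 = Ioo (0:ℝ) 1 := Ioo_union_Ico_eq_Ioo hx.1 hx.2.le
  have hdisj : Disjoint (Ioo (0:ℝ) x) (Ico x 1) := by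
    rw [Set.disjoint_left]
    intro y hy hy2
    exact absurd hy.2 (not_lt.mpr hy2.1)
  have hsplit : (∫ y in Ioo (0:ℝ) x, (P - Real.log y) * g b a y)
      + (∫ y in Ico x 1, (P - Real.log y) * g b a y) = 0 := by
    rw [← setIntegral_union hdisj measurableSet_Ico
      ((intOn_cg hb ha P).mono_set hsub) ((intOn_cg hb ha P).mono_set hsub2), hunion]
    exact cancel' hb ha
  set J := ∫ y in Ico x 1, (P - Real.log y) * g b a y with hJ
  have hIJ : (∫ y in Ioo (0:ℝ) x, (P - Real.log y) * g b a y) = -J := by linarith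
  -- bound |J|
  have hJb : |J| ≤ (M + 1) * c4 * ((1-x) ^ b / b) := by
    have h1 : |J| ≤ ∫ y in Ico x 1, ‖(P - Real.log y) * g b a y‖ := by
      rw [← Real.norm_eq_abs]
      exact norm_integral_le_integral_norm _
    have h2 : (∫ y in Ico x 1, ‖(P - Real.log y) * g b a y‖)
        ≤ ∫ y in Ico x 1, ((M + 1) * c4) * (1-y) ^ (b-1) := by
      refine setIntegral_mono_on (((intOn_cg hb ha P).mono_set hsub2).norm) ?_
        measurableSet_Ico (fun y hy => ?_)
      · have h := intervalIntegral.intervalIntegrable_rpow' (a := 0) (b := 1-x)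
          (by linarith : (-1:ℝ) < b - 1)
        have h2 := (h.comp_sub_left 1).symm
        norm_num at h2
        have h3 : IntegrableOn (fun y : ℝ => (1-y) ^ (b-1)) (Ioc x 1) := h2.1
        have h4 : IntegrableOn (fun y : ℝ => (1-y) ^ (b-1)) (Ico x 1) := by
          rw [integrableOn_Ico_iff_integrableOn_Ioo]
          exact h3.mono_set Ioo_subset_Ioc_self
        exact h4.const_mul _
      · have hy0 : 0 < y := lt_of_lt_of_le (by linarith) hy.1
        have hy1 : y < 1 := hy.2
        have hlog : |Real.log y| ≤ 1 := by
          rw [abs_of_nonpos (Real.log_nonpos hy0.le hy1.le)]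
          have hrw : -Real.log y = Real.log (1/y) := by
            rw [Real.log_div one_ne_zero (ne_of_gt hy0)]; simp
          rw [hrw]
          have h2' : 1/y ≤ 2 := by
            rw [div_le_iff₀ hy0]; linarith [hy.1]
          calc Real.log (1/y) ≤ Real.log 2 := Real.log_le_log (by positivity) h2'
            _ ≤ 1 := by linarith [Real.log_two_lt_d9]
        have hPl : |P - Real.log y| ≤ M + 1 := by
          calc |P - Real.log y| ≤ |P| + |Real.log y| := abs_sub _ _
            _ ≤ M + 1 := add_le_add hM hlog
        have hya : y ^ (a-1) ≤ c4 := base_rpow_le (by linarith [hy.1]) hy1.le hA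
        have hbm : (0:ℝ) ≤ (1-y) ^ (b-1) := Real.rpow_nonneg (by linarith) _
        have hyam : (0:ℝ) ≤ y ^ (a-1) := Real.rpow_nonneg hy0.le _
        rw [Real.norm_eq_abs, abs_mul]
        have hgabs : |g b a y| = y ^ (a-1) * (1-y) ^ (b-1) := by
          unfold g
          exact abs_of_nonneg (mul_nonneg hyam hbm)
        rw [hgabs]
        calc |P - Real.log y| * (y ^ (a-1) * (1-y) ^ (b-1))
            ≤ (M + 1) * (c4 * (1-y) ^ (b-1)) := by
              apply mul_le_mul hPl (mul_le_mul_of_nonneg_right hya hbm) ?_ (by linarith)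
              exact mul_nonneg hyam hbm
          _ = ((M + 1) * c4) * (1-y) ^ (b-1) := by ring
    have h3 : (∫ y in Ico x 1, ((M + 1) * c4) * (1-y) ^ (b-1))
        = ((M + 1) * c4) * ((1-x) ^ b / b) := by
      rw [integral_const_mul, integral_one_sub_rpow hb hx.2]
    linarith
  -- final
  unfold Lf
  rw [show (∫ y in Ioo (0:ℝ) x, (P - Real.log y) * y ^ (a-1) * fB b y)
      = ∫ y in Ioo (0:ℝ) x, (P - Real.log y) * g b a y from hI1, hIJ]
  have hfB : (fB b) x = (1-x) ^ (b-1) := Set.indicator_of_mem hx _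
  have h1x : (0:ℝ) < 1 - x := by linarith [hx.2]
  have hxma : (0:ℝ) < x ^ (-a) := Real.rpow_pos_of_pos hx.1 _
  have hfBpos : (0:ℝ) < fB b x := by rw [hfB]; exact Real.rpow_pos_of_pos h1x _
  have hfac : (0:ℝ) ≤ x ^ (-a) / fB b x := le_of_lt (div_pos hxma hfBpos)
  calc x ^ (-a) / fB b x * (-J) ≤ x ^ (-a) / fB b x * |J| := by
        apply mul_le_mul_of_nonneg_left (neg_le_abs J) hfac
    _ ≤ x ^ (-a) / fB b x * ((M + 1) * c4 * ((1-x) ^ b / b)) :=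
        mul_le_mul_of_nonneg_left hJb hfac
    _ = x ^ (-a) * ((M + 1) * c4 / b) * (((1-x) ^ (b-1))⁻¹ * (1-x) ^ b) := by
        rw [hfB]; ring
    _ = x ^ (-a) * ((M + 1) * c4 / b) * (1-x) := by
        have hpow : ((1-x) ^ (b-1))⁻¹ * (1-x) ^ b = 1 - x := by
          rw [← Real.rpow_neg h1x.le, ← Real.rpow_add h1x]
          norm_num
        rw [hpow]
    _ ≤ (2:ℝ) ^ a1 * ((M + 1) * c4 / b) * 1 := by
        have hx1 : x ^ (-a) ≤ (2:ℝ) ^ a1 := by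
          have s1 : x ^ (-a) ≤ ((1:ℝ)/2) ^ (-a) :=
            Real.rpow_le_rpow_of_nonpos (by norm_num) hx2 (by linarith)
          have s2 : ((1:ℝ)/2) ^ (-a) = (2:ℝ) ^ a := by rw [half_rpow]; norm_num
          have s3 : (2:ℝ) ^ a ≤ (2:ℝ) ^ a1 :=
            Real.rpow_le_rpow_of_exponent_le (by norm_num) hB
          linarith
        have hbody : (0:ℝ) ≤ (M + 1) * c4 / b := by positivity
        apply mul_le_mul (mul_le_mul_of_nonneg_right hx1 hbody) (by linarith [hx.2]) h1x.le
        positivity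
    _ = (2:ℝ) ^ a1 * ((M + 1) * c4) / b := by ring

end S9


open S9 in
/-- for the beta-type function `f(x) = (1-x)^{b-1} 1_{(0,1)}(x)` with
`b > 0` and `a` ranging in a compact `K ⊆ (0,∞)`, there is `C = C(K,b)` with
`L^f(a,x) ≤ C(1 + |log x|)` for all `x ∈ (0,1)`. -/
theorem stmt_9
    (b : ℝ) (hb : 0 < b)
    (f : ℝ → ℝ)
    (hf : f = Set.indicator (Set.Ioo (0 : ℝ) 1) (fun x => (1 - x) ^ (b - 1)))
    (K : Set ℝ) (hK : IsCompact K) (hKsub : K ⊆ Set.Ioi (0 : ℝ)) :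
    ∃ C : ℝ, ∀ a ∈ K, ∀ x ∈ Set.Ioo (0 : ℝ) 1,
      Lf f a x ≤ C * (1 + |Real.log x|) := by
  rcases K.eq_empty_or_nonempty with hKe | hKne
  · exact ⟨0, fun a ha => absurd ha (by rw [hKe]; exact Set.notMem_empty a)⟩
  have hfB : f = fB b := hf
  subst hfB
  set a0 := sInf K with ha0def
  set a1 := sSup K with ha1def
  have ha0K : a0 ∈ K := hK.sInf_mem hKne
  have ha1K : a1 ∈ K := hK.sSup_mem hKne
  have ha0pos : 0 < a0 := hKsub ha0K
  have hbdd : ∀ a ∈ K, a0 ≤ a ∧ a ≤ a1 := fun a ha =>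
    ⟨csInf_le hK.bddBelow ha, le_csSup hK.bddAbove ha⟩
  set M : ℝ := (∫ y in Set.Ioo (0:ℝ) 1, (1 + |Real.log y|) * g b a0 y)
      / ((min 1 ((4:ℝ)^(1-a1)) * min 1 ((2:ℝ)^(1-b))) * (4:ℝ)⁻¹) with hMdef
  have hMb : ∀ a ∈ K, |psi0 (fB b) a| ≤ M := fun a ha =>
    psi0_abs_le hb ha0pos (hbdd a ha).1 (hbdd a ha).2
  have hM0 : 0 ≤ M := le_trans (abs_nonneg _) (hMb a0 ha0K)
  set D : ℝ := M/a0 + 4/a0^2 + 1/a0 with hDdef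
  set C1 : ℝ := (max 1 ((2:ℝ)^(b-1)) * max 1 ((2:ℝ)^(1-b))) * D with hC1def
  set C2 : ℝ := (2:ℝ) ^ a1 * ((M + 1) * max 1 ((2:ℝ)^(1-a0))) / b with hC2def
  have hC2nn : 0 ≤ C2 := by
    have h1 : (0:ℝ) ≤ (2:ℝ) ^ a1 := Real.rpow_nonneg (by norm_num) _
    have h2 : (0:ℝ) ≤ max 1 ((2:ℝ)^(1-a0)) := le_trans zero_le_one (le_max_left _ _)
    positivity
  refine ⟨max C1 C2, fun a ha x hx => ?_⟩
  have haA := (hbdd a ha).1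
  have haB := (hbdd a ha).2
  have haPos : 0 < a := lt_of_lt_of_le ha0pos haA
  have hMa := hMb a ha
  have ht0 : 0 ≤ |Real.log x| := abs_nonneg _
  have hlx : |Real.log x| = -Real.log x := abs_of_nonpos (Real.log_nonpos hx.1.le hx.2.le)
  rcases le_or_gt x (1/2) with hsm | hlg
  · -- small x
    have h := case_small hb haPos hx hsm hMa
    have hc1c2 : (0:ℝ) ≤ max 1 ((2:ℝ)^(b-1)) * max 1 ((2:ℝ)^(1-b)) := by
      have u1 : (0:ℝ) ≤ max 1 ((2:ℝ)^(b-1)) := le_trans zero_le_one (le_max_left _ _)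
      have u2 : (0:ℝ) ≤ max 1 ((2:ℝ)^(1-b)) := le_trans zero_le_one (le_max_left _ _)
      positivity
    have hinner : (M - Real.log x)/a + 4/a^2 ≤ D * (1 + |Real.log x|) := by
      have i1 : (M - Real.log x)/a ≤ (M + |Real.log x|)/a0 := by
        apply div_le_div₀ (by linarith) (by rw [hlx]; linarith) ha0pos haA
      have i2 : 4/a^2 ≤ 4/a0^2 := by
        apply div_le_div₀ (by norm_num) le_rfl (by positivity)
        exact pow_le_pow_left₀ ha0pos.le haA 2
      have i3 : (M + |Real.log x|)/a0 = M/a0 + |Real.log x| * (1/a0) := by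
        field_simp
      have hs : (0:ℝ) ≤ M/a0 + 4/a0^2 := by positivity
      have hr : (0:ℝ) ≤ 1/a0 := by positivity
      have key : M/a0 + |Real.log x| * (1/a0) + 4/a0^2 ≤ D * (1 + |Real.log x|) := by
        rw [hDdef]
        nlinarith [mul_nonneg hs ht0]
      linarith
    calc Lf (fB b) a x
        ≤ (max 1 ((2:ℝ)^(b-1)) * max 1 ((2:ℝ)^(1-b))) * ((M - Real.log x)/a + 4/a^2) := h
      _ ≤ (max 1 ((2:ℝ)^(b-1)) * max 1 ((2:ℝ)^(1-b))) * (D * (1 + |Real.log x|)) :=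
          mul_le_mul_of_nonneg_left hinner hc1c2
      _ = C1 * (1 + |Real.log x|) := by rw [hC1def]; ring
      _ ≤ max C1 C2 * (1 + |Real.log x|) :=
          mul_le_mul_of_nonneg_right (le_max_left _ _) (by linarith)
  · -- large x
    have h := case_large hb ha0pos haA haB hx hlg.le hMa
    calc Lf (fB b) a x ≤ C2 := h
      _ = C2 * 1 := by ring
      _ ≤ C2 * (1 + |Real.log x|) := by nlinarith
      _ ≤ max C1 C2 * (1 + |Real.log x|) :=
          mul_le_mul_of_nonneg_right (le_max_right _ _) (by linarith)
end

section
/- Suppose the polymer model has the down-right property. Then for all (m,n) ∈ ℤ_+², E[log Z_{m,n}] = m E[log R^1] + n E[log R^2], and Var[log Z_{m,n}] = -m Var[log R^1] + n Var[log R^2] + 2 Cov(S_N, S_S), where S_N = Σ_{i=1}^m log R^1_{i,n} and S_S = Σ_{i=1}^m log R^1_{i,0}. -/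
open MeasureTheory ProbabilityTheory

lemma l2_mul_integrable {Ω : Type*} [MeasureSpace Ω] [IsProbabilityMeasure (volume : Measure Ω)]
    {f g : Ω → ℝ} (hf : MemLp f 2) (hg : MemLp g 2) :
    Integrable (fun ω => f ω * g ω) := by
  have h : MemLp (f • g) 1 (volume : Measure Ω) := by
    apply MemLp.smul hg hf
  exact (memLp_one_iff_integrable.mp h)

/-- under the down-right property (encoded by its consequences: the
decompositions `log Z = S_N + S_W = S_E + S_S`, the independence of `S_S, S_W` and of
`S_N, S_E`, and the marginal means/variances of the four boundary sums),
`E[log Z_{m,n}] = m E[log R¹] + n E[log R²]` and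
`Var[log Z_{m,n}] = -m Var[log R¹] + n Var[log R²] + 2 Cov(S_N, S_S)`. -/
theorem stmt_12
    {Ω : Type*} [MeasureSpace Ω] [IsProbabilityMeasure (volume : Measure Ω)]
    (m n : ℕ) (μ₁ μ₂ σ₁ σ₂ : ℝ)
    (SN SS SE SW logZ : Ω → ℝ)
    (hN2 : MemLp SN 2) (hS2 : MemLp SS 2) (hE2 : MemLp SE 2) (hW2 : MemLp SW 2)
    (hNW : ∀ ω, logZ ω = SN ω + SW ω)
    (hES : ∀ ω, logZ ω = SE ω + SS ω)
    (hindSW : IndepFun SS SW) (hindNE : IndepFun SN SE)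
    (hESN : (∫ ω, SN ω) = m * μ₁) (hESS : (∫ ω, SS ω) = m * μ₁)
    (hESE : (∫ ω, SE ω) = n * μ₂) (hESW : (∫ ω, SW ω) = n * μ₂)
    (hVN : variance SN volume = m * σ₁) (hVS : variance SS volume = m * σ₁)
    (hVE : variance SE volume = n * σ₂) (hVW : variance SW volume = n * σ₂) :
    (∫ ω, logZ ω) = m * μ₁ + n * μ₂ ∧
    variance logZ volume =
      -(m * σ₁) + n * σ₂ +
        2 * ∫ ω, (SN ω - m * μ₁) * (SS ω - m * μ₁) := by
  set a : ℝ := (m : ℝ) * μ₁ with ha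
  set b : ℝ := (n : ℝ) * μ₂ with hb
  have hNi : Integrable SN := hN2.integrable one_le_two
  have hSi : Integrable SS := hS2.integrable one_le_two
  have hEi : Integrable SE := hE2.integrable one_le_two
  have hWi : Integrable SW := hW2.integrable one_le_two
  -- centered functions are L²
  have hN2c : MemLp (fun ω => SN ω - a) 2 := hN2.sub (memLp_const a)
  have hS2c : MemLp (fun ω => SS ω - a) 2 := hS2.sub (memLp_const a)
  have hE2c : MemLp (fun ω => SE ω - b) 2 := hE2.sub (memLp_const b)
  have hW2c : MemLp (fun ω => SW ω - b) 2 := hW2.sub (memLp_const b)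
  have hNic : Integrable (fun ω => SN ω - a) := hN2c.integrable one_le_two
  have hSic : Integrable (fun ω => SS ω - a) := hS2c.integrable one_le_two
  have hEic : Integrable (fun ω => SE ω - b) := hE2c.integrable one_le_two
  have hWic : Integrable (fun ω => SW ω - b) := hW2c.integrable one_le_two
  -- mean
  have hmean : (∫ ω, logZ ω) = a + b := by
    have : (∫ ω, logZ ω) = ∫ ω, (SN ω + SW ω) := by
      exact integral_congr_ae (Filter.Eventually.of_forall hNW)
    rw [this, integral_add hNi hWi, hESN, hESW]
  refine ⟨hmean, ?_⟩
  -- centered means are zero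
  have hSc0 : (∫ ω, (SS ω - a)) = 0 := by
    rw [integral_sub hSi (integrable_const a), hESS, integral_const]
    simp [ha]
  have hWc0 : (∫ ω, (SW ω - b)) = 0 := by
    rw [integral_sub hWi (integrable_const b), hESW, integral_const]
    simp [hb]
  -- variance of SE and SS as centered second moments
  have hVEc : (∫ ω, (SE ω - b) ^ 2) = (n : ℝ) * σ₂ := by
    rw [← hVE, variance_eq_integral hE2.aemeasurable, hESE]
  have hVSc : (∫ ω, (SS ω - a) ^ 2) = (m : ℝ) * σ₁ := by
    rw [← hVS, variance_eq_integral hS2.aemeasurable, hESS]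
  -- independence kills the SS·SW covariance
  have hindc : IndepFun (fun ω => SS ω - a) (fun ω => SW ω - b) :=
    hindSW.comp (measurable_id.sub_const a) (measurable_id.sub_const b)
  have hcovWS : (∫ ω, (SS ω - a) * (SW ω - b)) = 0 := by
    have h := hindc.integral_mul_eq_mul_integral hSic.aestronglyMeasurable hWic.aestronglyMeasurable
    rw [show ((fun ω => SS ω - a) * fun ω => SW ω - b) = fun ω => (SS ω - a) * (SW ω - b)
      from rfl] at h
    rw [h, hSc0, hWc0, mul_zero]
  -- integrability of products
  have hiES : Integrable (fun ω => (SE ω - b) * (SS ω - a)) := l2_mul_integrable hE2c hS2c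
  have hiNS : Integrable (fun ω => (SN ω - a) * (SS ω - a)) := l2_mul_integrable hN2c hS2c
  have hiWS : Integrable (fun ω => (SS ω - a) * (SW ω - b)) := l2_mul_integrable hS2c hW2c
  have hiS2 : Integrable (fun ω => (SS ω - a) ^ 2) := hS2c.integrable_sq
  have hiE2 : Integrable (fun ω => (SE ω - b) ^ 2) := hE2c.integrable_sq
  -- cross covariance identity:  Cov(SE,SS) = Cov(SN,SS) + Cov(SS,SW) - Var SS
  have hcross : (∫ ω, (SE ω - b) * (SS ω - a)) =
      (∫ ω, (SN ω - a) * (SS ω - a)) - (m : ℝ) * σ₁ := by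
    have hpt : ∀ ω, (SE ω - b) * (SS ω - a) =
        (SN ω - a) * (SS ω - a) + (SS ω - a) * (SW ω - b) - (SS ω - a) ^ 2 := by
      intro ω
      have h1 := hNW ω
      have h2 := hES ω
      have : SE ω = SN ω + SW ω - SS ω := by linarith
      rw [this]; ring
    calc (∫ ω, (SE ω - b) * (SS ω - a))
        = ∫ ω, ((SN ω - a) * (SS ω - a) + (SS ω - a) * (SW ω - b) - (SS ω - a) ^ 2) :=
          integral_congr_ae (Filter.Eventually.of_forall hpt)
      _ = (∫ ω, ((SN ω - a) * (SS ω - a) + (SS ω - a) * (SW ω - b))) - ∫ ω, (SS ω - a) ^ 2 :=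
          integral_sub (hiNS.add hiWS) hiS2
      _ = (∫ ω, (SN ω - a) * (SS ω - a)) + (∫ ω, (SS ω - a) * (SW ω - b))
            - ∫ ω, (SS ω - a) ^ 2 := by rw [integral_add hiNS hiWS]
      _ = (∫ ω, (SN ω - a) * (SS ω - a)) - (m : ℝ) * σ₁ := by
          rw [hcovWS, hVSc]; ring
  -- variance of logZ
  have hZ2 : MemLp logZ 2 :=
    MemLp.ae_eq (Filter.Eventually.of_forall fun ω => (hNW ω).symm) (hN2.add hW2)
  have hVZ : variance logZ volume = ∫ ω, (logZ ω - (a + b)) ^ 2 := by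
    rw [variance_eq_integral hZ2.aemeasurable, hmean]
  have hpt2 : ∀ ω, (logZ ω - (a + b)) ^ 2 =
      (SE ω - b) ^ 2 + 2 * ((SE ω - b) * (SS ω - a)) + (SS ω - a) ^ 2 := by
    intro ω
    rw [hES ω]; ring
  calc variance logZ volume
      = ∫ ω, ((SE ω - b) ^ 2 + 2 * ((SE ω - b) * (SS ω - a)) + (SS ω - a) ^ 2) := by
        rw [hVZ]; exact integral_congr_ae (Filter.Eventually.of_forall hpt2)
    _ = (∫ ω, ((SE ω - b) ^ 2 + 2 * ((SE ω - b) * (SS ω - a)))) + ∫ ω, (SS ω - a) ^ 2 :=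
        integral_add (hiE2.add (hiES.const_mul 2)) hiS2
    _ = (∫ ω, (SE ω - b) ^ 2) + (∫ ω, 2 * ((SE ω - b) * (SS ω - a))) + ∫ ω, (SS ω - a) ^ 2 := by
        rw [integral_add hiE2 (hiES.const_mul 2)]
    _ = (n : ℝ) * σ₂ + 2 * ((∫ ω, (SN ω - a) * (SS ω - a)) - (m : ℝ) * σ₁) + (m : ℝ) * σ₁ := by
        rw [hVEc, hVSc, integral_const_mul, hcross]
    _ = -((m : ℝ) * σ₁) + (n : ℝ) * σ₂ + 2 * ∫ ω, (SN ω - (m : ℝ) * μ₁) * (SS ω - (m : ℝ) * μ₁) := by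
        rw [← ha]; ring
end
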